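/- arXiv:2007.12690 — 7 statements merged into one kernel-verified Lean document; each statement's English description precedes it below -/
import Mathlib

section
/- A rooted labeled forest that avoids the pattern 123 avoids the pattern 2413 if and only if it is a P₁-forest. -/
/-- A rooted labeled forest on `[n]`: vertices are identified with their labels in `Fin n`
(`i : Fin n` representing the label `i+1`), each vertex has an optional parent, and the
parent relation is acyclic. Components are rooted at the vertices with no parent, and
children are unordered since only the parent function is recorded. -/
structure RForest (n : ℕ) where
  parent : Fin n → Option (Fin n)
  acyclic : ∀ v : Fin n, ¬ Relation.TransGen (fun a b => parent b = some a) v v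

namespace RForest

variable {n : ℕ}

/-- `u` is a strict ancestor of `v`. -/
def SAnc (F : RForest n) (u v : Fin n) : Prop :=
  Relation.TransGen (fun a b => F.parent b = some a) u v

/-- `u` is an ancestor of `v` (possibly `u = v`). -/
def Anc (F : RForest n) (u v : Fin n) : Prop :=
  F.SAnc u v ∨ u = v

/-- `F` is a tree: it has exactly one root, i.e. exactly one component. -/
def IsTree (F : RForest n) : Prop :=
  ∃! r : Fin n, F.parent r = none

end RForest

/-- A pattern of length `k` is a permutation of `[k]` (presented 0-indexed on `Fin k`). -/
abbrev Pattern (k : ℕ) := Equiv.Perm (Fin k)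

/-- The complement of a pattern: `π̄(i) = k + 1 - π(i)` in 1-indexed terms. -/
def Pattern.compl {k : ℕ} (π : Pattern k) : Pattern k :=
  π.trans ⟨Fin.rev, Fin.rev, Fin.rev_rev, Fin.rev_rev⟩

/-- `F` contains a (classical) instance of the pattern `π`: vertices `v 0, …, v (k-1)`,
each a strict ancestor of the next, whose labels are in the same relative order as `π`. -/
def ContainsPat {n k : ℕ} (F : RForest n) (π : Pattern k) : Prop :=
  ∃ v : Fin k → Fin n,
    (∀ i j : Fin k, i < j → F.SAnc (v i) (v j)) ∧
    (∀ i j : Fin k, v i < v j ↔ π i < π j)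

/-- `v` is a consecutive instance of `π` in `F`: a downward path (each vertex the parent of
the next) whose labels are in the same relative order as `π`. -/
def IsConsInstance {n k : ℕ} (F : RForest n) (π : Pattern k) (v : Fin k → Fin n) : Prop :=
  (∀ i j : Fin k, (j : ℕ) = (i : ℕ) + 1 → F.parent (v j) = some (v i)) ∧
  (∀ i j : Fin k, v i < v j ↔ π i < π j)

/-- `F` contains a consecutive instance of `π`. -/
def CContainsPat {n k : ℕ} (F : RForest n) (π : Pattern k) : Prop :=
  ∃ v, IsConsInstance F π v

/-- `F` avoids every pattern in the set `S` (of patterns of arbitrary lengths). -/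
def AvoidsSet {n : ℕ} (F : RForest n) (S : Set ((k : ℕ) × Pattern k)) : Prop :=
  ∀ p ∈ S, ¬ ContainsPat F p.2

/-- `f_n(S)`: the number of rooted labeled forests on `[n]` avoiding `S`. -/
noncomputable def fCount (S : Set ((k : ℕ) × Pattern k)) (n : ℕ) : ℕ :=
  Nat.card {F : RForest n // AvoidsSet F S}

/-- `t_n(S)`: the number of rooted labeled trees on `[n]` avoiding `S`. -/
noncomputable def tCount (S : Set ((k : ℕ) × Pattern k)) (n : ℕ) : ℕ :=
  Nat.card {F : RForest n // F.IsTree ∧ AvoidsSet F S}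

/-- The number of rooted labeled forests on `[n]` consecutively avoiding `π`. -/
noncomputable def cCount {k : ℕ} (π : Pattern k) (n : ℕ) : ℕ :=
  Nat.card {F : RForest n // ¬ CContainsPat F π}

/-- c-forest-Wilf equivalence of two patterns. -/
def CForestWilfEquiv {k k' : ℕ} (π : Pattern k) (π' : Pattern k') : Prop :=
  ∀ n : ℕ, cCount π n = cCount π' n

def p123 : Pattern 3 := 1
def p132 : Pattern 3 := ⟨![0, 2, 1], ![0, 2, 1], by intro x; fin_cases x <;> rfl, by intro x; fin_cases x <;> rfl⟩
def p213 : Pattern 3 := ⟨![1, 0, 2], ![1, 0, 2], by intro x; fin_cases x <;> rfl, by intro x; fin_cases x <;> rfl⟩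
def p231 : Pattern 3 := ⟨![1, 2, 0], ![2, 0, 1], by intro x; fin_cases x <;> rfl, by intro x; fin_cases x <;> rfl⟩
def p312 : Pattern 3 := ⟨![2, 0, 1], ![1, 2, 0], by intro x; fin_cases x <;> rfl, by intro x; fin_cases x <;> rfl⟩
def p321 : Pattern 3 := ⟨![2, 1, 0], ![2, 1, 0], by intro x; fin_cases x <;> rfl, by intro x; fin_cases x <;> rfl⟩
def p2413 : Pattern 4 := ⟨![1, 3, 0, 2], ![2, 0, 3, 1], by intro x; fin_cases x <;> rfl, by intro x; fin_cases x <;> rfl⟩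
def p2314 : Pattern 4 := ⟨![1, 2, 0, 3], ![2, 0, 1, 3], by intro x; fin_cases x <;> rfl, by intro x; fin_cases x <;> rfl⟩
def p3142 : Pattern 4 := ⟨![2, 0, 3, 1], ![1, 3, 0, 2], by intro x; fin_cases x <;> rfl, by intro x; fin_cases x <;> rfl⟩
def p3124 : Pattern 4 := ⟨![2, 0, 1, 3], ![1, 2, 0, 3], by intro x; fin_cases x <;> rfl, by intro x; fin_cases x <;> rfl⟩

/-- A top-down minimum: every ancestor has label at least `L(v)`. -/
def TDM {n : ℕ} (F : RForest n) (v : Fin n) : Prop :=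
  ∀ u : Fin n, F.Anc u v → v ≤ u

/-- A special vertex: a non-TDM vertex `v` such that the path from the root to `v`
contains `v₁, v₂, v₃, v₄ = v` in that order, with `v₁, v₃` TDM and `v₂, v₄` non-TDM. -/
def SpecialV {n : ℕ} (F : RForest n) (v : Fin n) : Prop :=
  ¬ TDM F v ∧ ∃ v₁ v₂ v₃ : Fin n, TDM F v₁ ∧ ¬ TDM F v₂ ∧ TDM F v₃ ∧
    F.Anc v₁ v₂ ∧ F.Anc v₂ v₃ ∧ F.Anc v₃ v

/-- `u` is an ancestor of `v` such that the path from `u` to `v` contains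
`v₁ = u, v₂, v₃, v₄ = v` in that order, with `v₁, v₃` TDM and `v₂, v₄` non-TDM. -/
def CeilCand {n : ℕ} (F : RForest n) (u v : Fin n) : Prop :=
  TDM F u ∧ ∃ v₂ v₃ : Fin n, ¬ TDM F v₂ ∧ TDM F v₃ ∧
    F.Anc u v₂ ∧ F.Anc v₂ v₃ ∧ F.Anc v₃ v

/-- `u` is the ceiling of the special vertex `v`: the lowest ancestor with the above
property (every other candidate is an ancestor of `u`). -/
def IsCeiling {n : ℕ} (F : RForest n) (u v : Fin n) : Prop :=
  CeilCand F u v ∧ ∀ u' : Fin n, CeilCand F u' v → F.Anc u' u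

/-- A `P₁`-forest: every special vertex `v` with ceiling `u` satisfies `L(u) > L(v)`. -/
def IsP1 {n : ℕ} (F : RForest n) : Prop :=
  ∀ v u : Fin n, SpecialV F v → IsCeiling F u v → v < u

/-- The segment of a vertex `v`: the TDM ancestors `u` of `v` with `L(u) < L(v)`. -/
def Segment {n : ℕ} (F : RForest n) (v : Fin n) : Set (Fin n) :=
  {u | TDM F u ∧ F.Anc u v ∧ u < v}

/-- `u` is the top of the segment of `v`: the element of the segment of least label. -/
def IsTopOf {n : ℕ} (F : RForest n) (u v : Fin n) : Prop :=
  u ∈ Segment F v ∧ ∀ w ∈ Segment F v, u ≤ w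

/-- A `P₂`-forest: whenever two comparable non-TDM vertices have intersecting segments,
the tops of their segments coincide. -/
def IsP2 {n : ℕ} (F : RForest n) : Prop :=
  ∀ v w : Fin n, ¬ TDM F v → ¬ TDM F w → (F.Anc v w ∨ F.Anc w v) →
    (Segment F v ∩ Segment F w).Nonempty →
    ∀ a b : Fin n, IsTopOf F a v → IsTopOf F b w → a = b


section Aux

namespace RForest

variable {n : ℕ} {F : RForest n}

lemma anc_refl (v : Fin n) : F.Anc v v := Or.inr rfl

lemma sanc_trans {a b c : Fin n} (h1 : F.SAnc a b) (h2 : F.SAnc b c) : F.SAnc a c :=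
  Relation.TransGen.trans h1 h2

lemma anc_trans {a b c : Fin n} (h1 : F.Anc a b) (h2 : F.Anc b c) : F.Anc a c := by
  rcases h1 with h1 | rfl
  · rcases h2 with h2 | rfl
    · exact Or.inl (h1.trans h2)
    · exact Or.inl h1
  · exact h2

lemma sanc_of_anc_ne {a b : Fin n} (h : F.Anc a b) (hne : a ≠ b) : F.SAnc a b := by
  rcases h with h | rfl
  · exact h
  · exact absurd rfl hne

lemma anc_antisymm {a b : Fin n} (h1 : F.Anc a b) (h2 : F.Anc b a) : a = b := by
  by_contra hne
  exact F.acyclic a ((sanc_of_anc_ne h1 hne).trans (sanc_of_anc_ne h2 (Ne.symm hne)))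

lemma anc_iff_rtg {a b : Fin n} :
    F.Anc a b ↔ Relation.ReflTransGen (fun a b => F.parent b = some a) a b := by
  rw [Relation.reflTransGen_iff_eq_or_transGen]
  constructor
  · rintro (h | rfl)
    · exact Or.inr h
    · exact Or.inl rfl
  · rintro (rfl | h)
    · exact Or.inr rfl
    · exact Or.inl h

private lemma rtg_comp : ∀ {v a : Fin n},
    Relation.ReflTransGen (fun a b => F.parent b = some a) a v →
    ∀ b, Relation.ReflTransGen (fun a b => F.parent b = some a) b v →
    Relation.ReflTransGen (fun a b => F.parent b = some a) a b ∨
      Relation.ReflTransGen (fun a b => F.parent b = some a) b a := by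
  intro v a ha
  induction ha with
  | refl => intro b hb; exact Or.inr hb
  | @tail c w hac hstep ih =>
    intro b hb
    rcases hb.cases_tail with rfl | ⟨c', hbc', hstep'⟩
    · exact Or.inl (hac.tail hstep)
    · have hcc : c' = c := by
        have := hstep'.symm.trans hstep
        exact Option.some_injective _ this
      subst hcc
      exact ih b hbc'

lemma anc_comp {a b v : Fin n} (ha : F.Anc a v) (hb : F.Anc b v) : F.Anc a b ∨ F.Anc b a := by
  rw [anc_iff_rtg] at ha hb
  rcases rtg_comp ha b hb with h | h
  · exact Or.inl (anc_iff_rtg.mpr h)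
  · exact Or.inr (anc_iff_rtg.mpr h)

end RForest

open RForest

variable {n : ℕ}

lemma exists_minAnc (F : RForest n) (v : Fin n) :
    ∃ m : Fin n, F.Anc m v ∧ TDM F m ∧ ∀ w, F.Anc w v → m ≤ w := by
  obtain ⟨m, hm, hmin⟩ :=
    Set.exists_min_image {w : Fin n | F.Anc w v} id (Set.toFinite _) ⟨v, anc_refl v⟩
  exact ⟨m, hm, fun u hu => hmin u (anc_trans hu hm), fun w hw => hmin w hw⟩

noncomputable def depthF (F : RForest n) (u : Fin n) : ℕ := Set.ncard {w : Fin n | F.SAnc w u}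

lemma depthF_lt {F : RForest n} {a b : Fin n} (h : F.SAnc a b) : depthF F a < depthF F b := by
  apply Set.ncard_lt_ncard _ (Set.toFinite _)
  have hsub : {w : Fin n | F.SAnc w a} ⊆ {w : Fin n | F.SAnc w b} :=
    fun w hw => Relation.TransGen.trans hw h
  rw [Set.ssubset_iff_of_subset hsub]
  exact ⟨a, h, fun ha => F.acyclic a ha⟩

lemma not_tdm_of {F : RForest n} {u v : Fin n} (ha : F.Anc u v) (hlt : u < v) : ¬ TDM F v :=
  fun hT => absurd (hT u ha) (not_le.mpr hlt)

lemma contains123_of (F : RForest n) {a b c : Fin n} (h1 : F.SAnc a b) (h2 : F.SAnc b c)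
    (hab : a < b) (hbc : b < c) : ContainsPat F p123 := by
  refine ⟨![a, b, c], ?_, ?_⟩
  · intro i j hij
    fin_cases i <;> fin_cases j <;>
      first
        | exact absurd hij (by decide)
        | exact h1
        | exact h2
        | exact h1.trans h2
  · intro i j
    fin_cases i <;> fin_cases j <;>
      first
        | exact iff_of_true hab (by decide)
        | exact iff_of_true hbc (by decide)
        | exact iff_of_true (hab.trans hbc) (by decide)
        | exact iff_of_false (lt_irrefl _) (by decide)
        | exact iff_of_false (asymm hab) (by decide)
        | exact iff_of_false (asymm hbc) (by decide)
        | exact iff_of_false (asymm (hab.trans hbc)) (by decide)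

lemma contains2413_of (F : RForest n) {a b c d : Fin n}
    (h1 : F.SAnc a b) (h2 : F.SAnc b c) (h3 : F.SAnc c d)
    (hca : c < a) (had : a < d) (hdb : d < b) : ContainsPat F p2413 := by
  have hab : a < b := had.trans hdb
  have hcd : c < d := hca.trans had
  have hcb : c < b := hcd.trans hdb
  refine ⟨![a, b, c, d], ?_, ?_⟩
  · intro i j hij
    fin_cases i <;> fin_cases j <;>
      first
        | exact absurd hij (by decide)
        | exact h1
        | exact h2
        | exact h3
        | exact h1.trans h2
        | exact h2.trans h3
        | exact (h1.trans h2).trans h3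
  · intro i j
    fin_cases i <;> fin_cases j <;>
      first
        | exact iff_of_true hca (by decide)
        | exact iff_of_true had (by decide)
        | exact iff_of_true hdb (by decide)
        | exact iff_of_true hab (by decide)
        | exact iff_of_true hcd (by decide)
        | exact iff_of_true hcb (by decide)
        | exact iff_of_false (lt_irrefl _) (by decide)
        | exact iff_of_false (asymm hca) (by decide)
        | exact iff_of_false (asymm had) (by decide)
        | exact iff_of_false (asymm hdb) (by decide)
        | exact iff_of_false (asymm hab) (by decide)
        | exact iff_of_false (asymm hcd) (by decide)
        | exact iff_of_false (asymm hcb) (by decide)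

end Aux

open RForest

/-- A `123`-avoiding forest avoids `2413` if and only if it is a `P₁`-forest. -/
theorem avoid123_avoid2413_iff_P1 {n : ℕ} (F : RForest n) (h : ¬ ContainsPat F p123) :
    ¬ ContainsPat F p2413 ↔ IsP1 F := by
  classical
  constructor
  · -- avoid 2413 implies P1
    intro h2413
    by_contra hP1
    unfold IsP1 at hP1
    push_neg at hP1
    obtain ⟨v, u, hsp, hceil, hvu⟩ := hP1
    obtain ⟨hTu, v₂, v₃, hnt2, ht3, ha12, ha23, ha3v⟩ := hceil.1
    have hnv : ¬ TDM F v := hsp.1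
    have huv_ne : u ≠ v := fun he => hnv (he ▸ hTu)
    have hulv : u < v := lt_of_le_of_ne hvu huv_ne
    have hau3 : F.Anc u v₃ := anc_trans ha12 ha23
    have h3u_ne : v₃ ≠ u := by
      intro he
      subst he
      exact hnt2 (((anc_antisymm ha23 ha12) ▸ ht3))
    have h3u : v₃ < u := lt_of_le_of_ne (ht3 u hau3) h3u_ne
    have h2v_ne : v₂ ≠ v := by
      intro he
      subst he
      exact hnt2 ((anc_antisymm ha3v ha23) ▸ ht3)
    have h2u_ne : v₂ ≠ u := fun he => hnt2 (he ▸ hTu)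
    have ha2v : F.Anc v₂ v := anc_trans ha23 ha3v
    rcases lt_trichotomy v₂ u with hcase | hcase | hcase
    · -- v₂ < u : contradiction with ceiling minimality
      obtain ⟨m, hm2, hTm, hmin⟩ := exists_minAnc F v₂
      have hmlt : m < u := lt_of_le_of_lt (hmin v₂ (anc_refl v₂)) hcase
      have hcand : CeilCand F m v := ⟨hTm, v₂, v₃, hnt2, ht3, hm2, ha23, ha3v⟩
      have hmu : F.Anc m u := hceil.2 m hcand
      exact absurd (hTu m hmu) (not_le.mpr hmlt)
    · exact h2u_ne hcase
    · rcases lt_trichotomy v₂ v with hc2 | hc2 | hc2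
      · -- u < v₂ < v : a 123 instance
        exact h (contains123_of F (sanc_of_anc_ne ha12 (Ne.symm h2u_ne))
          (sanc_of_anc_ne ha2v h2v_ne) hcase hc2)
      · exact h2v_ne hc2
      · -- v < v₂ : a 2413 instance u, v₂, v₃, v
        exact h2413 (contains2413_of F (sanc_of_anc_ne ha12 (Ne.symm h2u_ne))
          (sanc_of_anc_ne ha23 (fun he => hnt2 (he ▸ ht3)))
          (sanc_of_anc_ne ha3v (fun he => hnv (he ▸ ht3)))
          h3u hulv hc2)
  · -- P1 implies avoid 2413
    intro hP1 hC
    obtain ⟨x, hch, hord⟩ := hC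
    have c12 : F.SAnc (x 0) (x 1) := hch 0 1 (by decide)
    have c23 : F.SAnc (x 1) (x 2) := hch 1 2 (by decide)
    have c34 : F.SAnc (x 2) (x 3) := hch 2 3 (by decide)
    have h31 : x 2 < x 0 := (hord 2 0).mpr (by decide)
    have h14 : x 0 < x 3 := (hord 0 3).mpr (by decide)
    have h42 : x 3 < x 1 := (hord 3 1).mpr (by decide)
    have h12 : x 0 < x 1 := h14.trans h42
    have h34 : x 2 < x 3 := h31.trans h14
    -- x2 := x 1 and x4 := x 3 are non-TDM
    have hnt2 : ¬ TDM F (x 1) := not_tdm_of (Or.inl c12) h12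
    have hnt4 : ¬ TDM F (x 3) := not_tdm_of (Or.inl c34) h34
    -- m1 : minimum-label TDM ancestor of x 1
    obtain ⟨m1, hm1a, hTm1, hmin1⟩ := exists_minAnc F (x 1)
    have hm1le : m1 ≤ x 0 := hmin1 (x 0) (Or.inl c12)
    -- s : minimum-label vertex between x 1 and x 3
    obtain ⟨s, ⟨hs2, hs4⟩, hsmin⟩ :=
      Set.exists_min_image {w : Fin n | F.Anc (x 1) w ∧ F.Anc w (x 3)} id (Set.toFinite _)
        ⟨x 2, Or.inl c23, Or.inl c34⟩
    have hsle3 : s ≤ x 2 := hsmin (x 2) ⟨Or.inl c23, Or.inl c34⟩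
    have hTs : TDM F s := by
      intro w hws
      rcases anc_comp hws hs2 with hw2 | h2w
      · by_contra hnle
        have hws' : w < s := not_le.mp hnle
        have hwlt3 : w < x 2 := lt_of_lt_of_le hws' hsle3
        exact h (contains123_of F
          (sanc_of_anc_ne (anc_trans hw2 (Or.inl c23)) (ne_of_lt hwlt3))
          c34 hwlt3 h34)
      · exact hsmin w ⟨h2w, anc_trans hws hs4⟩
    have hcand1 : CeilCand F m1 (x 3) := ⟨hTm1, x 1, s, hnt2, hTs, hm1a, hs2, hs4⟩
    have hspec : SpecialV F (x 3) := ⟨hnt4, m1, x 1, s, hTm1, hnt2, hTs, hm1a, hs2, hs4⟩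
    -- the ceiling exists : candidate of maximal depth
    have cand_anc : ∀ u', CeilCand F u' (x 3) → F.Anc u' (x 3) := by
      rintro u' ⟨-, a, b, -, -, h1, h2, h3⟩
      exact anc_trans h1 (anc_trans h2 h3)
    obtain ⟨us, husC, hmax⟩ :=
      Set.exists_max_image {u : Fin n | CeilCand F u (x 3)} (depthF F) (Set.toFinite _)
        ⟨m1, hcand1⟩
    have hceil : IsCeiling F us (x 3) := by
      refine ⟨husC, fun u' hu' => ?_⟩
      rcases anc_comp (cand_anc u' hu') (cand_anc us husC) with h' | h'
      · exact h'
      · rcases h' with h' | rfl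
        · exact absurd (hmax u' hu') (not_le.mpr (depthF_lt h'))
        · exact anc_refl _
    have hml : F.Anc m1 us := hceil.2 m1 hcand1
    have husle : us ≤ m1 := husC.1 m1 hml
    have : x 3 < us := hP1 (x 3) us hspec hceil
    exact absurd ((husle.trans hm1le).trans_lt h14) (not_lt.mpr this.le)
end

section
/- A rooted labeled forest that avoids the pattern 132 avoids the pattern 2314 if and only if it is a P₁-forest. -/
section AuxP1

variable {n : ℕ} (F : RForest n)

lemma anc_refl' (a : Fin n) : F.Anc a a := Or.inr rfl

lemma anc_trans' {a b c : Fin n} (h1 : F.Anc a b) (h2 : F.Anc b c) : F.Anc a c := by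
  rcases h1 with h1 | rfl
  · rcases h2 with h2 | rfl
    · exact Or.inl (h1.trans h2)
    · exact Or.inl h1
  · exact h2

lemma anc_antisymm' {a b : Fin n} (h1 : F.Anc a b) (h2 : F.Anc b a) : a = b := by
  rcases h1 with h1 | rfl
  · rcases h2 with h2 | rfl
    · exact absurd (h1.trans h2) (F.acyclic a)
    · rfl
  · rfl

lemma sanc_of_anc_ne {a b : Fin n} (h1 : F.Anc a b) (h2 : a ≠ b) : F.SAnc a b := by
  rcases h1 with h1 | rfl
  · exact h1
  · exact absurd rfl h2

lemma sanc_comparable {a v : Fin n} (ha : F.SAnc a v) :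
    ∀ b, F.SAnc b v → F.Anc a b ∨ F.Anc b a := by
  induction ha with
  | single h =>
    intro b hb
    cases hb with
    | single h' =>
      right; right
      exact Option.some.inj (h'.symm.trans h)
    | tail hb' h' =>
      have : _ = a := Option.some.inj (h'.symm.trans h)
      right; left; exact this ▸ hb'
  | tail hw hstep ih =>
    intro b hb
    cases hb with
    | single h' =>
      have hbw : b = _ := Option.some.inj (h'.symm.trans hstep)
      left; left; exact hbw ▸ hw
    | tail hb' h' =>
      have : _ = _ := Option.some.inj (h'.symm.trans hstep)
      exact ih b (this ▸ hb')

lemma anc_comparable' {a b v : Fin n} (ha : F.Anc a v) (hb : F.Anc b v) :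
    F.Anc a b ∨ F.Anc b a := by
  rcases ha with ha | rfl
  · rcases hb with hb | rfl
    · exact sanc_comparable F ha b hb
    · exact Or.inl (Or.inl ha)
  · exact Or.inr hb

lemma exists_min_anc (x : Fin n) :
    ∃ m, TDM F m ∧ F.Anc m x ∧ ∀ z, F.Anc z x → m ≤ z := by
  obtain ⟨m, hm, hmin⟩ := Set.exists_min_image {z | F.Anc z x} id
    (Set.toFinite _) ⟨x, anc_refl' F x⟩
  exact ⟨m, fun u hu => hmin u (anc_trans' F hu hm), hm, fun z hz => hmin z hz⟩

lemma not_tdm_of_wit {v u : Fin n} (h1 : F.Anc u v) (h2 : u < v) : ¬ TDM F v :=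
  fun htdm => absurd (htdm u h1) (not_le.mpr h2)

lemma not_tdm_wit {v : Fin n} (h : ¬ TDM F v) : ∃ u, F.Anc u v ∧ u < v := by
  unfold TDM at h
  push_neg at h
  exact h

noncomputable def fdepth (u : Fin n) : ℕ := Set.ncard {w | F.SAnc w u}

lemma fdepth_lt {u u' : Fin n} (h : F.SAnc u u') : fdepth F u < fdepth F u' := by
  apply Set.ncard_lt_ncard _ (Set.toFinite _)
  rw [Set.ssubset_def]
  constructor
  · intro w hw; exact Relation.TransGen.trans hw h
  · intro hsub
    exact F.acyclic u (hsub h)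

lemma exists_ceiling {v : Fin n} (hne : ∃ u, CeilCand F u v) : ∃ u, IsCeiling F u v := by
  obtain ⟨u, hu, hmax⟩ := Set.exists_max_image {u' | CeilCand F u' v} (fdepth F)
    (Set.toFinite _) hne
  have anc_of_cand : ∀ w, CeilCand F w v → F.Anc w v := by
    rintro w ⟨-, v2, v3, -, -, h1, h2, h3⟩
    exact anc_trans' F (anc_trans' F h1 h2) h3
  refine ⟨u, hu, ?_⟩
  intro u' hu'
  rcases anc_comparable' F (anc_of_cand u' hu') (anc_of_cand u hu) with h | h
  · exact h
  · rcases h with h | rfl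
    · exact absurd (hmax u' hu') (not_le.mpr (fdepth_lt F h))
    · exact anc_refl' F u

lemma no132 (h : ¬ ContainsPat F p132) {x y z : Fin n}
    (hxy : F.SAnc x y) (hyz : F.SAnc y z) (h1 : x < z) (h2 : z < y) : False := by
  apply h
  have h3 : x < y := h1.trans h2
  have hcases : ∀ k : Fin 3, k = 0 ∨ k = 1 ∨ k = 2 := by decide
  refine ⟨![x, y, z], ?_, ?_⟩
  · intro i j hij
    rcases hcases i with rfl|rfl|rfl <;> rcases hcases j with rfl|rfl|rfl <;>
      first
        | exact absurd hij (by decide)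
        | exact hxy | exact hyz | exact hxy.trans hyz
  · have e1 : (x : ℕ) < z := h1
    have e2 : (z : ℕ) < y := h2
    intro i j
    rcases hcases i with rfl|rfl|rfl <;> rcases hcases j with rfl|rfl|rfl <;>
      simp only [Matrix.cons_val_zero, Matrix.cons_val_one, Matrix.head_cons,
        Matrix.cons_val_two, Matrix.tail_cons] <;>
      first
        | exact iff_of_true (Fin.lt_def.mpr (by omega)) (by decide)
        | exact iff_of_false (fun hc => by have := Fin.lt_def.mp hc; omega) (by decide)

lemma contains2314 {x1 x2 x3 x4 : Fin n} (h12 : F.SAnc x1 x2) (h23 : F.SAnc x2 x3)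
    (h34 : F.SAnc x3 x4) (o1 : x3 < x1) (o2 : x1 < x2) (o3 : x2 < x4) :
    ContainsPat F p2314 := by
  have hcases : ∀ k : Fin 4, k = 0 ∨ k = 1 ∨ k = 2 ∨ k = 3 := by decide
  refine ⟨![x1, x2, x3, x4], ?_, ?_⟩
  · intro i j hij
    rcases hcases i with rfl|rfl|rfl|rfl <;> rcases hcases j with rfl|rfl|rfl|rfl <;>
      first
        | exact absurd hij (by decide)
        | exact h12 | exact h23 | exact h34
        | exact h12.trans h23 | exact h23.trans h34
        | exact (h12.trans h23).trans h34
  · have e1 : (x3 : ℕ) < x1 := o1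
    have e2 : (x1 : ℕ) < x2 := o2
    have e3 : (x2 : ℕ) < x4 := o3
    intro i j
    rcases hcases i with rfl|rfl|rfl|rfl <;> rcases hcases j with rfl|rfl|rfl|rfl <;>
      simp only [Matrix.cons_val_zero, Matrix.cons_val_one, Matrix.head_cons,
        Matrix.cons_val_two, Matrix.tail_cons, Matrix.cons_val_three] <;>
      first
        | exact iff_of_true (Fin.lt_def.mpr (by omega)) (by decide)
        | exact iff_of_false (fun hc => by have := Fin.lt_def.mp hc; omega) (by decide)

end AuxP1

/-- A `132`-avoiding forest avoids `2314` if and only if it is a `P₁`-forest. -/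
theorem avoid132_avoid2314_iff_P1 {n : ℕ} (F : RForest n) (h : ¬ ContainsPat F p132) :
    ¬ ContainsPat F p2314 ↔ IsP1 F := by
  constructor
  · -- avoid 2314 → P₁
    intro h2314 v u hsp hceil
    by_contra hvu
    push_neg at hvu
    obtain ⟨hvnt, -⟩ := hsp
    obtain ⟨⟨hut, v₂, v₃, h2nt, h3t, hu2, h23, h3v⟩, hmin⟩ := hceil
    -- basic disequalities
    have huv2 : u ≠ v₂ := fun e => h2nt (e ▸ hut)
    have h23ne : v₂ ≠ v₃ := fun e => h2nt (e ▸ h3t)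
    have h3vne : v₃ ≠ v := fun e => hvnt (e ▸ h3t)
    have su2 : F.SAnc u v₂ := sanc_of_anc_ne F hu2 huv2
    have s23 : F.SAnc v₂ v₃ := sanc_of_anc_ne F h23 h23ne
    have s3v : F.SAnc v₃ v := sanc_of_anc_ne F h3v h3vne
    have huvne : u ≠ v := fun e => hvnt (e ▸ hut)
    have huv : u < v := lt_of_le_of_ne hvu huvne
    -- v₃ < u
    have hu3 : F.Anc u v₃ := anc_trans' F hu2 h23
    have h3u : v₃ ≤ u := h3t u hu3
    have h3une : v₃ ≠ u := by
      intro e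
      exact huv2 (anc_antisymm' F (Or.inl su2) (e ▸ h23))
    have h3ltu : v₃ < u := lt_of_le_of_ne h3u h3une
    -- v₂ < v
    have s2v : F.SAnc v₂ v := s23.trans s3v
    have h2vne : v₂ ≠ v := fun e => (F.acyclic v) (e ▸ s2v)
    have h2v : v₂ < v := by
      by_contra hc
      push_neg at hc
      exact no132 F h su2 s2v huv (lt_of_le_of_ne hc (Ne.symm h2vne))
    -- u < v₂
    have hu2lt : u < v₂ := by
      by_contra hc
      push_neg at hc
      have h2u : v₂ < u := lt_of_le_of_ne hc (Ne.symm huv2)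
      obtain ⟨w, hw, hwlt⟩ := not_tdm_wit F h2nt
      obtain ⟨m, hmt, hm2, hmmin⟩ := exists_min_anc F v₂
      have hmw : m ≤ w := hmmin w hw
      have hmu : m < u := lt_of_le_of_lt (hmw.trans hwlt.le) h2u
      have hmune : m ≠ u := ne_of_lt hmu
      have : F.SAnc u m := by
        rcases anc_comparable' F hm2 hu2 with hc' | hc'
        · exact absurd (hut m hc') (not_le.mpr hmu)
        · exact sanc_of_anc_ne F hc' (Ne.symm hmune)
      have hcand : CeilCand F m v := ⟨hmt, v₂, v₃, h2nt, h3t, hm2, h23, h3v⟩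
      exact hmune (anc_antisymm' F (hmin m hcand) (Or.inl this))
    exact h2314 (contains2314 F su2 s23 s3v h3ltu hu2lt h2v)
  · -- P₁ → avoid 2314
    intro hP1 hcont
    obtain ⟨x, hanc, hord⟩ := hcont
    set x1 := x 0; set x2 := x 1; set x3 := x 2; set x4 := x 3
    have o1 : x3 < x1 := (hord 2 0).mpr (by decide)
    have o2 : x1 < x2 := (hord 0 1).mpr (by decide)
    have o3 : x2 < x4 := (hord 1 3).mpr (by decide)
    have s12 : F.SAnc x1 x2 := hanc 0 1 (by decide)
    have s23 : F.SAnc x2 x3 := hanc 1 2 (by decide)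
    have s34 : F.SAnc x3 x4 := hanc 2 3 (by decide)
    obtain ⟨a, hat, ha1, hamin⟩ := exists_min_anc F x1
    obtain ⟨t, htt, ht3, htmin⟩ := exists_min_anc F x3
    have ha1le : a ≤ x1 := hamin x1 (anc_refl' F x1)
    have ht3le : t ≤ x3 := htmin x3 (anc_refl' F x3)
    have htx2 : t < x2 := lt_of_le_of_lt ht3le (o1.trans o2)
    -- t is strictly below x2
    have sx2t : F.SAnc x2 t := by
      rcases anc_comparable' F ht3 (Or.inl s23) with hc | hc
      · exfalso
        have stx2 : F.SAnc t x2 := sanc_of_anc_ne F hc (ne_of_lt htx2)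
        have htne3 : t ≠ x3 := by
          intro e
          exact (ne_of_lt htx2) (anc_antisymm' F hc (Or.inl (e ▸ s23))) |>.elim
        exact no132 F h stx2 s23 (lt_of_le_of_ne ht3le htne3) (o1.trans o2)
      · exact sanc_of_anc_ne F hc (ne_of_gt htx2)
    have h2nt : ¬ TDM F x2 := not_tdm_of_wit F (Or.inl s12) o2
    have h4nt : ¬ TDM F x4 := not_tdm_of_wit F (Or.inl s34) (o1.trans (o2.trans o3))
    have hax2 : F.Anc a x2 := anc_trans' F ha1 (Or.inl s12)
    have ht4 : F.Anc t x4 := anc_trans' F ht3 (Or.inl s34)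
    have hsp : SpecialV F x4 :=
      ⟨h4nt, a, x2, t, hat, h2nt, htt, hax2, Or.inl sx2t, ht4⟩
    have hacand : CeilCand F a x4 := ⟨hat, x2, t, h2nt, htt, hax2, Or.inl sx2t, ht4⟩
    obtain ⟨u, hu, humin⟩ := exists_ceiling F ⟨a, hacand⟩
    have hx4u : x4 < u := hP1 x4 u hsp ⟨hu, humin⟩
    have halt : a < x4 := lt_of_le_of_lt ha1le (o2.trans o3)
    have hau : F.SAnc a u :=
      sanc_of_anc_ne F (humin a hacand) (ne_of_lt (halt.trans hx4u))
    have hux4 : F.SAnc u x4 := by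
      obtain ⟨-, w2, w3, -, -, hq1, hq2, hq3⟩ := hu
      exact sanc_of_anc_ne F (anc_trans' F (anc_trans' F hq1 hq2) hq3) (ne_of_gt hx4u)
    exact no132 F h hau hux4 halt hx4u
end

section
/- Let π be a grounded pattern with streak s, and let p be an integer with 1 ≤ p ≤ s. Then in any p-pseudo cluster with respect to π, the root of the underlying tree has label 1. -/
/-- The streak of `π`: the largest `m ≤ k` such that `π(i) = i` for all `1 ≤ i ≤ m`
(0-indexed: `π i = i` for all `i < m`). -/
noncomputable def streak {k : ℕ} (π : Pattern k) : ℕ :=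
  sSup {m | m ≤ k ∧ ∀ i : Fin k, (i : ℕ) < m → (π i : ℕ) = (i : ℕ)}

/-- The height of the entry at (0-indexed) position `t` of `π`: the largest `m ≤ t` such
that the `m` consecutive entries of `π` ending at position `t` are increasing. -/
noncomputable def heightAt {k : ℕ} (π : Pattern k) (t : Fin k) : ℕ :=
  sSup {m | m ≤ (t : ℕ) ∧ ∀ a b : Fin k, (t : ℕ) < (a : ℕ) + m →
    (b : ℕ) = (a : ℕ) + 1 → (b : ℕ) ≤ (t : ℕ) → π a < π b}

/-- The max height of `π`: the maximum of the heights over all non-initial positions. -/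
noncomputable def maxHeight {k : ℕ} (π : Pattern k) : ℕ :=
  sSup {h | ∃ t : Fin k, 0 < (t : ℕ) ∧ h = heightAt π t}

/-- A pattern is grounded if it is not the identity and its max height is at most its
streak. -/
def Grounded {k : ℕ} (π : Pattern k) : Prop :=
  π ≠ 1 ∧ maxHeight π ≤ streak π

/-- The number of rooted labeled forests on `[n]` with exactly `m` consecutive
instances of `π`. -/
noncomputable def strongCount {k : ℕ} (π : Pattern k) (n m : ℕ) : ℕ :=
  Nat.card {F : RForest n // Nat.card {v : Fin k → Fin n // IsConsInstance F π v} = m}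

/-- Strong c-forest-Wilf equivalence: for all `m, n`, the number of forests on `[n]`
with exactly `m` consecutive instances of `π` equals that for `π'`. -/
def StrongCEquiv {k : ℕ} (π π' : Pattern k) : Prop :=
  ∀ m n : ℕ, strongCount π n m = strongCount π' n m

/-- A `p`-pseudo cluster with respect to `π` (of length `k`): a rooted labeled tree on
`[n]` together with a set `H` of distinct highlighted consecutive instances of the suffix
patterns `π(1)⋯π(k), π(2)⋯π(k), …, π(p)⋯π(k)` (an element `⟨q, w⟩` of `H` is an instance
of the suffix `π(q+1)⋯π(k)`), such that every instance of a proper suffix contains the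
root, every vertex belongs to a highlighted instance, and the highlighted instances are
connected (no proper nonempty vertex set contains or misses every instance). -/
structure PseudoCluster (n k p : ℕ) (π : Pattern k) where
  F : RForest n
  tree : ∃! r : Fin n, F.parent r = none
  H : Set ((q : ℕ) × (Fin (k - q) → Fin n))
  suffix_lt : ∀ I ∈ H, I.1 < p
  path : ∀ I ∈ H, ∀ i j : Fin (k - I.1), (j : ℕ) = (i : ℕ) + 1 →
    F.parent (I.2 j) = some (I.2 i)
  order : ∀ I ∈ H, ∀ i j : Fin (k - I.1),
    (I.2 i < I.2 j ↔
      π ⟨I.1 + (i : ℕ), by have := i.isLt; omega⟩ <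
      π ⟨I.1 + (j : ℕ), by have := j.isLt; omega⟩)
  root_mem : ∀ I ∈ H, 0 < I.1 → ∃ i : Fin (k - I.1), F.parent (I.2 i) = none
  cover : ∀ v : Fin n, ∃ I ∈ H, ∃ i : Fin (k - I.1), I.2 i = v
  connected : ¬ ∃ V : Set (Fin n), V.Nonempty ∧ V ≠ Set.univ ∧
    ∀ I ∈ H, (∀ i : Fin (k - I.1), I.2 i ∈ V) ∨ (∀ i : Fin (k - I.1), I.2 i ∉ V)

/-- The streak is a member of its defining set. -/
lemma streak_spec {k : ℕ} (π : Pattern k) :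
    streak π ≤ k ∧ ∀ i : Fin k, (i : ℕ) < streak π → (π i : ℕ) = (i : ℕ) := by
  have h : streak π ∈ {m | m ≤ k ∧ ∀ i : Fin k, (i : ℕ) < m → (π i : ℕ) = (i : ℕ)} := by
    apply Nat.sSup_mem
    · exact ⟨0, Nat.zero_le k, fun i hi => absurd hi (Nat.not_lt_zero _)⟩
    · exact ⟨k, fun m hm => hm.1⟩
  exact h

/-- If `a` is within the streak and `a < b`, then `π a < π b`. -/
lemma pi_lt_of_streak {k : ℕ} (π : Pattern k) (a b : Fin k)
    (ha : (a : ℕ) < streak π) (hab : a < b) : π a < π b := by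
  have hs := (streak_spec π).2
  have h1 : (π a : ℕ) = (a : ℕ) := hs a ha
  rw [Fin.lt_def]
  by_contra hcon
  push_neg at hcon
  have hv : (π b : ℕ) < streak π := by omega
  have hvk : (π b : ℕ) < k := (π b).isLt
  have h2 : (π ⟨(π b : ℕ), hvk⟩ : ℕ) = (π b : ℕ) := hs _ hv
  have h3 : π ⟨(π b : ℕ), hvk⟩ = π b := Fin.ext h2
  have h4 : (⟨(π b : ℕ), hvk⟩ : Fin k) = b := π.injective h3
  have h5 : (π b : ℕ) = (b : ℕ) := congrArg Fin.val h4
  rw [Fin.lt_def] at hab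
  omega

/-- Transitivity for ancestors. -/
lemma RForest.Anc.trans' {n : ℕ} {F : RForest n} {a b c : Fin n}
    (h1 : F.Anc a b) (h2 : F.Anc b c) : F.Anc a c := by
  rcases h1 with h1 | h1 <;> rcases h2 with h2 | h2
  · exact Or.inl (h1.trans h2)
  · exact Or.inl (h2 ▸ h1)
  · exact Or.inl (h1.symm ▸ h2)
  · exact Or.inr (h1.trans h2)

/-- In any `p`-pseudo cluster (`1 ≤ p ≤ streak π`) with respect to a grounded pattern `π`,
the root of the underlying tree has label `1` (0-indexed: label `0`). -/
theorem pseudoCluster_root_label_one {k : ℕ} (π : Pattern k) (hg : Grounded π)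
    (p : ℕ) (hp1 : 1 ≤ p) (hps : p ≤ streak π) {n : ℕ} (C : PseudoCluster n k p π) :
    ∀ r : Fin n, C.F.parent r = none → (r : ℕ) = 0 := by
  intro r hr
  classical
  have npos : 0 < n := r.pos
  set z : Fin n := ⟨0, npos⟩ with hzdef
  -- streak is strictly less than k since π ≠ 1
  have hsk : streak π < k := by
    have h1 := (streak_spec π).1
    rcases lt_or_eq_of_le h1 with h | h
    · exact h
    · exfalso
      apply hg.1
      apply Equiv.ext
      intro i
      exact Fin.ext ((streak_spec π).2 i (by have := i.isLt; omega))
  -- every instance starts below k, so index 0 exists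
  have hqk : ∀ I ∈ C.H, I.1 < k := by
    intro I hI
    have := C.suffix_lt I hI
    omega
  -- the minimum label in any instance is at the top (position 0)
  have htop : ∀ I ∈ C.H, ∀ (h0 : 0 < k - I.1), ∀ i : Fin (k - I.1),
      I.2 i = z → (i : ℕ) = 0 := by
    intro I hI h0 i hiz
    by_contra hne
    have hqs : I.1 < streak π := lt_of_lt_of_le (C.suffix_lt I hI) hps
    have h2 : I.2 ⟨0, h0⟩ < I.2 i := by
      rw [C.order I hI ⟨0, h0⟩ i]
      apply pi_lt_of_streak
      · show I.1 + 0 < streak π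
        omega
      · rw [Fin.lt_def]
        show I.1 + 0 < I.1 + (i : ℕ)
        omega
    rw [hiz, Fin.lt_def] at h2
    exact Nat.not_lt_zero _ h2
  -- the top of an instance is an ancestor of every vertex of the instance
  have hanc : ∀ I ∈ C.H, ∀ (h0 : 0 < k - I.1), ∀ (m : ℕ) (i : Fin (k - I.1)),
      (i : ℕ) = m → C.F.Anc (I.2 ⟨0, h0⟩) (I.2 i) := by
    intro I hI h0 m
    induction m with
    | zero =>
      intro i hi
      have : i = ⟨0, h0⟩ := Fin.ext hi
      rw [this]
      exact Or.inr rfl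
    | succ m ih =>
      intro i hi
      have hm : m < k - I.1 := by have := i.isLt; omega
      have hp' : C.F.parent (I.2 i) = some (I.2 ⟨m, hm⟩) := by
        apply C.path I hI ⟨m, hm⟩ i
        simpa using hi
      have h1 := ih ⟨m, hm⟩ rfl
      have h2 : C.F.SAnc (I.2 ⟨m, hm⟩) (I.2 i) := Relation.TransGen.single hp'
      rcases h1 with h1 | h1
      · exact Or.inl (h1.trans h2)
      · exact Or.inl (by rw [h1]; exact h2)
  -- main case split
  by_cases hpz : C.F.parent z = none
  · obtain ⟨r₀, hr₀, huniq⟩ := C.tree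
    have h1 : r = r₀ := huniq r hr
    have h2 : z = r₀ := huniq z hpz
    rw [h1, ← h2]
  · exfalso
    apply C.connected
    refine ⟨{v | C.F.Anc z v}, ⟨z, Or.inr rfl⟩, ?_, ?_⟩
    · -- the root is not a descendant of z
      intro hV
      have hrV : r ∈ {v | C.F.Anc z v} := hV ▸ Set.mem_univ r
      rcases hrV with h | h
      · cases h with
        | single h' => rw [hr] at h'; cases h'
        | tail _ h' => rw [hr] at h'; cases h'
      · rw [h] at hpz
        exact hpz hr
    · intro I hI
      have h0 : 0 < k - I.1 := by have := hqk I hI; omega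
      by_cases hin : I.2 ⟨0, h0⟩ ∈ {v | C.F.Anc z v}
      · left
        intro i
        exact RForest.Anc.trans' hin (hanc I hI h0 (i : ℕ) i rfl)
      · right
        have key : ∀ m : ℕ, ∀ i : Fin (k - I.1), (i : ℕ) = m →
            I.2 i ∉ {v | C.F.Anc z v} := by
          intro m
          induction m using Nat.strong_induction_on with
          | _ m ih =>
            intro i hi hmem
            have hi0 : (i : ℕ) ≠ 0 := by
              intro h
              apply hin
              have he : i = ⟨0, h0⟩ := Fin.ext h
              rw [← he]
              exact hmem
            have hi' : (i : ℕ) - 1 < k - I.1 := by have := i.isLt; omega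
            have hpar : C.F.parent (I.2 i) = some (I.2 ⟨(i : ℕ) - 1, hi'⟩) := by
              apply C.path I hI ⟨(i : ℕ) - 1, hi'⟩ i
              show (i : ℕ) = (i : ℕ) - 1 + 1
              omega
            rcases hmem with h | h
            · obtain ⟨b, hb1, hb2⟩ := (Relation.TransGen.tail'_iff).mp h
              rw [hpar] at hb2
              have hbe : I.2 ⟨(i : ℕ) - 1, hi'⟩ = b := Option.some.inj hb2
              rw [← hbe] at hb1
              have hmem' : I.2 ⟨(i : ℕ) - 1, hi'⟩ ∈ {v | C.F.Anc z v} := by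
                rcases (Relation.reflTransGen_iff_eq_or_transGen).mp hb1 with h' | h'
                · exact Or.inr h'.symm
                · exact Or.inl h'
              exact ih ((i : ℕ) - 1) (by omega) ⟨(i : ℕ) - 1, hi'⟩ rfl hmem'
            · exact hi0 (htop I hI h0 i h.symm)
        intro i
        exact key (i : ℕ) i rfl
end

section
/- Let S be a set of patterns none of which begins with 1 (i.e., every π ∈ S has π(1) ≠ 1). Then t_{k+1}(S) ≥ f_k(S) for all k ≥ 0. -/
section Aux

variable {k : ℕ}

/-- Parent function of the extension: new vertex `0` becomes the root, old roots attach to it. -/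
def extParent (F : RForest k) : Fin (k + 1) → Option (Fin (k + 1)) :=
  Fin.cases none (fun i => (F.parent i).elim (some 0) (fun j => some j.succ))

lemma extParent_zero (F : RForest k) : extParent F 0 = none := by simp [extParent]

lemma extParent_succ (F : RForest k) (i : Fin k) :
    extParent F i.succ = (F.parent i).elim (some 0) (fun j => some j.succ) := by
  simp [extParent]

lemma ext_ne_zero (F : RForest k) {u w : Fin (k + 1)}
    (h : Relation.TransGen (fun a b => extParent F b = some a) u w) : w ≠ 0 := by
  induction h with
  | single h => intro hw; rw [hw, extParent_zero] at h; exact nomatch h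
  | tail _ h _ => intro hw; rw [hw, extParent_zero] at h; exact nomatch h

lemma ext_descend (F : RForest k) {a : Fin k} {w : Fin (k + 1)}
    (h : Relation.TransGen (fun a b => extParent F b = some a) a.succ w) :
    ∀ b : Fin k, w = b.succ →
      Relation.TransGen (fun a b => F.parent b = some a) a b := by
  induction h with
  | single h =>
    intro b hb
    subst hb
    rw [extParent_succ] at h
    cases hp : F.parent b with
    | none => rw [hp] at h; simp at h; exact absurd h.symm (Fin.succ_ne_zero a)
    | some j =>
      rw [hp] at h; simp at h
      subst h
      exact Relation.TransGen.single hp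
  | tail h1 h2 ih =>
    intro b hb
    subst hb
    rw [extParent_succ] at h2
    cases hp : F.parent b with
    | none =>
      rw [hp] at h2; simp at h2
      exact absurd h2.symm (ext_ne_zero F h1)
    | some j =>
      rw [hp] at h2; simp at h2
      subst h2
      exact Relation.TransGen.tail (ih j rfl) hp

/-- The extension of a forest on `[k]` to a tree on `[k+1]`. -/
def extForest (F : RForest k) : RForest (k + 1) where
  parent := extParent F
  acyclic := by
    intro v hv
    rcases Fin.eq_zero_or_eq_succ v with rfl | ⟨i, rfl⟩
    · exact ext_ne_zero F hv rfl
    · exact F.acyclic i (ext_descend F hv i rfl)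

lemma extForest_isTree (F : RForest k) : (extForest F).IsTree := by
  refine ⟨0, extParent_zero F, ?_⟩
  intro r hr
  rcases Fin.eq_zero_or_eq_succ r with rfl | ⟨i, rfl⟩
  · rfl
  · exfalso
    have := hr
    rw [show (extForest F).parent = extParent F from rfl, extParent_succ] at this
    cases hp : F.parent i <;> rw [hp] at this <;> simp at this

lemma extForest_avoids {S : Set ((k : ℕ) × Pattern k)}
    (h : ∀ p ∈ S, ∀ h0 : 0 < p.1, (p.2 ⟨0, h0⟩ : ℕ) ≠ 0)
    (F : RForest k) (hF : AvoidsSet F S) : AvoidsSet (extForest F) S := by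
  rintro ⟨k', π⟩ hp ⟨v, h1, h2⟩
  by_cases hz : ∃ i, v i = 0
  · obtain ⟨i, hi⟩ := hz
    have h0 : 0 < k' := Nat.pos_of_ne_zero (fun hh => by subst hh; exact i.elim0)
    haveI : NeZero k' := ⟨h0.ne'⟩
    set low : Fin k' := ⟨0, h0⟩ with hlow
    have hil : i = low := by
      by_contra hne
      have hlt : low < i := lt_of_le_of_ne (Fin.zero_le _) (Ne.symm hne)
      have := h1 low i hlt
      rw [hi] at this
      exact ext_ne_zero F this rfl
    subst hil
    -- π low is the minimum, i.e. (π low : ℕ) = 0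
    have hmin : (π low : ℕ) = 0 := by
      by_contra hne0
      have hne : π low ≠ π (π.symm 0) := by
        rw [Equiv.apply_symm_apply]
        intro hh; exact hne0 (by rw [hh]; rfl)
      have hjne : low ≠ π.symm 0 := fun hh => hne (by rw [hh])
      have hvne : v low ≠ v (π.symm 0) := by
        intro hh
        rcases lt_trichotomy (π low) (π (π.symm 0)) with h' | h' | h'
        · exact ((h2 low (π.symm 0)).mpr h').ne hh
        · exact hne h'
        · exact ((h2 (π.symm 0) low).mpr h').ne hh.symm
      have hvlt : v low < v (π.symm 0) := by
        rw [hi]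
        exact lt_of_le_of_ne (Fin.zero_le _) (by rw [← hi]; exact hvne)
      have := (h2 low (π.symm 0)).mp hvlt
      rw [Equiv.apply_symm_apply] at this
      exact absurd (Nat.eq_zero_of_le_zero (Fin.le_def.mp this.le)) hne0
    exact h ⟨k', π⟩ hp h0 hmin
  · push_neg at hz
    refine hF ⟨k', π⟩ hp ⟨fun i => (v i).pred (hz i), ?_, ?_⟩
    · intro i j hij
      have := h1 i j hij
      exact ext_descend F (by
        rw [Fin.succ_pred (v i) (hz i)]
        exact (show Relation.TransGen (fun a b => extParent F b = some a) (v i) (v j) from this))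
        ((v j).pred (hz j)) (Fin.succ_pred _ _).symm
    · intro i j
      rw [← h2 i j]
      constructor
      · intro hh
        have := Fin.succ_lt_succ_iff.mpr hh
        rwa [Fin.succ_pred, Fin.succ_pred] at this
      · intro hh
        rw [← Fin.succ_pred (v i) (hz i), ← Fin.succ_pred (v j) (hz j)] at hh
        exact Fin.succ_lt_succ_iff.mp hh

lemma extForest_injective : Function.Injective (extForest (k := k)) := by
  intro F1 F2 hFG
  have hp : extParent F1 = extParent F2 := congrArg RForest.parent hFG
  have hpar : F1.parent = F2.parent := by
    funext i
    have := congrFun hp i.succ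
    rw [extParent_succ, extParent_succ] at this
    cases h1 : F1.parent i <;> cases h2 : F2.parent i <;>
        rw [h1, h2] at this <;> simp only [Option.elim, Option.some.injEq] at this
    all_goals first
      | rfl
      | exact absurd this.symm (Fin.succ_ne_zero _)
      | exact absurd this (Fin.succ_ne_zero _)
      | rw [Fin.succ_inj.mp this]
  cases F1; cases F2; simpa using hpar

instance {n : ℕ} : Finite (RForest n) :=
  Finite.of_injective (fun F => F.parent) (by
    rintro ⟨p1, a1⟩ ⟨p2, a2⟩ h; simpa using h)

end Aux

/-- If no pattern in `S` begins with `1`, then `t_{k+1}(S) ≥ f_k(S)` for all `k ≥ 0`. -/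
theorem fCount_le_tCount_succ (S : Set ((k : ℕ) × Pattern k))
    (h : ∀ p ∈ S, ∀ h0 : 0 < p.1, (p.2 ⟨0, h0⟩ : ℕ) ≠ 0) :
    ∀ k : ℕ, fCount S k ≤ tCount S (k + 1) := by
  intro k
  have hinj : Function.Injective
      (fun F : {F : RForest k // AvoidsSet F S} =>
        (⟨extForest F.1, extForest_isTree F.1, extForest_avoids h F.1 F.2⟩ :
          {F : RForest (k + 1) // F.IsTree ∧ AvoidsSet F S})) := by
    intro F1 F2 hh
    exact Subtype.ext (extForest_injective (congrArg Subtype.val hh))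
  exact Nat.card_le_card_of_injective _ hinj
end

section
/- Let S = {132, 231, 321}. Then t_n(S) = n! for every n ≥ 1, and the limit lim_{n→∞} f_n(S)^{1/n}/n exists and equals e^{−1}. -/
namespace RF
open RForest

theorem rfext {n : ℕ} (F G : RForest n) (h : F.parent = G.parent) : F = G := by
  cases F; cases G; simpa using h

instance {n : ℕ} : Finite (RForest n) :=
  Finite.of_injective (fun F => F.parent) (fun a b h => rfext a b h)

/-- key chain lemma for a parent function satisfying the local property -/
theorem chain_lemma {n : ℕ} (p : Fin n → Option (Fin n))
    (hp : ∀ v u, p v = some u → (p u = none ∨ u < v)) :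
    ∀ a b : Fin n, Relation.TransGen (fun a b => p b = some a) a b →
      p b ≠ none ∧ (p a = none ∨ a < b) := by
  intro a b h
  induction h with
  | single h => exact ⟨by simp [h], hp _ _ h⟩
  | tail h1 h2 ih =>
    refine ⟨by simp [h2], ?_⟩
    rcases hp _ _ h2 with h3 | h3
    · exact absurd h3 ih.1
    · rcases ih.2 with h4 | h4
      · exact Or.inl h4
      · exact Or.inr (h4.trans h3)

theorem acyclic_of_local {n : ℕ} (p : Fin n → Option (Fin n))
    (hp : ∀ v u, p v = some u → (p u = none ∨ u < v)) :
    ∀ v : Fin n, ¬ Relation.TransGen (fun a b => p b = some a) v v := by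
  intro v h
  rcases chain_lemma p hp v v h with ⟨h1, h2 | h2⟩
  · exact h1 h2
  · exact absurd h2 (lt_irrefl v)

/-- `Good F`: the middle of any 3-chain is smaller than the bottom. -/
def Good {n : ℕ} (F : RForest n) : Prop :=
  ∀ a b c : Fin n, F.SAnc a b → F.SAnc b c → b < c

theorem good_of_local {n : ℕ} (F : RForest n)
    (hp : ∀ v u, F.parent v = some u → (F.parent u = none ∨ u < v)) : Good F := by
  intro a b c h1 h2
  have hb : F.parent b ≠ none := (chain_lemma F.parent hp a b h1).1
  rcases (chain_lemma F.parent hp b c h2).2 with h | h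
  · exact absurd h hb
  · exact h

theorem local_of_good {n : ℕ} (F : RForest n) (hg : Good F) :
    ∀ v u, F.parent v = some u → (F.parent u = none ∨ u < v) := by
  intro v u h
  rcases hu : F.parent u with _ | w
  · exact Or.inl rfl
  · exact Or.inr (hg w u v (Relation.TransGen.single hu) (Relation.TransGen.single h))

theorem sanc_parent_ne_none {n : ℕ} (F : RForest n) {a b : Fin n} (h : F.SAnc a b) :
    F.parent b ≠ none := by
  induction h with
  | single h => simp [h]
  | tail h1 h2 ih => simp [h2]

theorem sanc_ne {n : ℕ} (F : RForest n) {a b : Fin n} (h : F.SAnc a b) : a ≠ b := by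
  rintro rfl; exact F.acyclic a h

end RF

namespace RF
open RForest

def S3 : Set ((k : ℕ) × Pattern k) := {⟨3, p132⟩, ⟨3, p231⟩, ⟨3, p321⟩}

theorem avoids_iff {n : ℕ} (F : RForest n) : AvoidsSet F S3 ↔ Good F := by
  constructor
  · intro hA
    by_contra hg
    simp only [Good, not_forall] at hg
    obtain ⟨a, b, c, h1, h2, h3⟩ := hg
    have hcb : c < b := lt_of_le_of_ne (not_lt.1 h3) (fun h => (sanc_ne F h2) h.symm)
    have hac : F.SAnc a c := h1.trans h2
    have hab : a ≠ b := sanc_ne F h1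
    have hac' : a ≠ c := sanc_ne F hac
    have hchain : ∀ i j : Fin 3, i < j → F.SAnc (![a,b,c] i) (![a,b,c] j) := by
      intro i j hij
      fin_cases i <;> fin_cases j <;> simp <;>
        first
          | exact h1 | exact h2 | exact hac
          | exact absurd hij (by decide)
    rcases lt_trichotomy a c with h4 | h4 | h4
    · refine hA ⟨3, p132⟩ (by simp [S3]) ⟨![a,b,c], hchain, ?_⟩
      intro i j
      fin_cases i <;> fin_cases j <;> simp [p132] <;> omega
    · exact absurd h4 hac'
    · rcases lt_trichotomy a b with h5 | h5 | h5
      · refine hA ⟨3, p231⟩ (by simp [S3]) ⟨![a,b,c], hchain, ?_⟩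
        intro i j
        fin_cases i <;> fin_cases j <;> simp [p231] <;> omega
      · exact absurd h5 hab
      · refine hA ⟨3, p321⟩ (by simp [S3]) ⟨![a,b,c], hchain, ?_⟩
        intro i j
        fin_cases i <;> fin_cases j <;> simp [p321] <;> omega
  · intro hg p hp hc
    obtain ⟨v, hch, hord⟩ := hc
    have key : ∀ (π : Pattern 3), p = ⟨3, π⟩ → π 2 < π 1 → False := by
      rintro π rfl hπ
      have h12 : v 2 < v 1 := (hord 2 1).2 hπ
      have := hg (v 0) (v 1) (v 2) (hch 0 1 (show (0:Fin 3) < 1 by decide)) (hch 1 2 (show (1:Fin 3) < 2 by decide))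
      exact absurd this (not_lt.2 h12.le)
    rcases hp with h | h | h
    · exact key p132 h (by decide)
    · exact key p231 h (by decide)
    · exact key p321 h (by decide)


def csize (n : ℕ) (r v : Fin n) : ℕ := if v = r then 1 else if r < v then v.val else v.val + 1

lemma csize_lt {n : ℕ} {r v : Fin n} (h : r < v) : csize n r v = v.val := by
  simp [csize, (ne_of_gt h : v ≠ r), h]

lemma csize_gt {n : ℕ} {r v : Fin n} (h : v < r) : csize n r v = v.val + 1 := by
  simp [csize, (ne_of_lt h : v ≠ r), (not_lt.2 (le_of_lt h) : ¬ r < v)]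

lemma csize_self {n : ℕ} (r : Fin n) : csize n r r = 1 := by simp [csize]

def Code (n : ℕ) := Σ r : Fin n, ∀ v : Fin n, Fin (csize n r v)

instance {n : ℕ} : Fintype (Code n) := by unfold Code; infer_instance

def decode {n : ℕ} (r v : Fin n) (h : ¬ v = r) (x : Fin (csize n r v)) : Fin n :=
  if h2 : r < v then ⟨x.val, lt_trans (lt_of_lt_of_eq x.isLt (csize_lt h2)) v.isLt⟩
  else if h3 : x.val = v.val then r
  else ⟨x.val, by
    have h4 : v < r := lt_of_le_of_ne (not_lt.1 h2) h
    have hx : x.val < v.val + 1 := lt_of_lt_of_eq x.isLt (csize_gt h4)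
    have := v.isLt; omega⟩

def encode {n : ℕ} (r v u : Fin n) (h : ¬ v = r) (hu : u = r ∨ u < v) : Fin (csize n r v) :=
  if h2 : r < v then ⟨u.val, by
      rw [csize_lt h2]
      rcases hu with rfl | hu
      · exact h2
      · exact hu⟩
  else if h3 : u = r then ⟨v.val, by
      have h4 : v < r := lt_of_le_of_ne (not_lt.1 h2) h
      rw [csize_gt h4]; omega⟩
  else ⟨u.val, by
      have h4 : v < r := lt_of_le_of_ne (not_lt.1 h2) h
      rw [csize_gt h4]
      rcases hu with rfl | hu
      · exact absurd rfl h3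
      · have : u.val < v.val := hu
        omega⟩

lemma decode_spec {n : ℕ} (r v : Fin n) (h : ¬ v = r) (x : Fin (csize n r v)) :
    decode r v h x = r ∨ decode r v h x < v := by
  unfold decode
  split_ifs with h2 h3
  · exact Or.inr (by simp only [Fin.lt_def]; exact lt_of_lt_of_eq x.isLt (csize_lt h2))
  · exact Or.inl rfl
  · have h4 : v < r := lt_of_le_of_ne (not_lt.1 h2) h
    have hx : x.val < v.val + 1 := lt_of_lt_of_eq x.isLt (csize_gt h4)
    exact Or.inr (by simp only [Fin.lt_def]; omega)

lemma decode_encode {n : ℕ} (r v u : Fin n) (h : ¬ v = r) (hu : u = r ∨ u < v) :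
    decode r v h (encode r v u h hu) = u := by
  by_cases h2 : r < v
  · simp only [encode, decode, dif_pos h2]
  · by_cases h3 : u = r
    · subst h3
      simp [encode, decode, dif_neg h2]
    · have huv : u < v := hu.resolve_left h3
      have hne : u.val ≠ v.val := ne_of_lt huv
      simp [encode, decode, dif_neg h2, dif_neg h3, hne]

lemma encode_decode {n : ℕ} (r v : Fin n) (h : ¬ v = r) (x : Fin (csize n r v)) :
    encode r v (decode r v h x) h (decode_spec r v h x) = x := by
  by_cases h2 : r < v
  · simp only [decode, encode, dif_pos h2]
  · have h4 : v < r := lt_of_le_of_ne (not_lt.1 h2) h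
    by_cases h3 : x.val = v.val
    · simp only [decode, encode, dif_neg h2, dif_pos h3, dif_pos rfl]
      exact Fin.ext h3.symm
    · have hxr : ¬ ((⟨x.val, by
          have hx : x.val < v.val + 1 := lt_of_lt_of_eq x.isLt (csize_gt h4)
          have := v.isLt; omega⟩ : Fin n) = r) := by
        have hx : x.val < v.val + 1 := lt_of_lt_of_eq x.isLt (csize_gt h4)
        have hvr : v.val < r.val := h4
        simp only [Fin.ext_iff]; omega
      simp only [decode, encode, dif_neg h2, dif_neg h3, dif_neg hxr]

lemma encode_congr {n : ℕ} {r v : Fin n} (h : ¬ v = r) {u1 u2 : Fin n}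
    (h1 : u1 = r ∨ u1 < v) (h2 : u2 = r ∨ u2 < v) (e : u1 = u2) :
    encode r v u1 h h1 = encode r v u2 h h2 := by subst e; rfl

def treeP {n : ℕ} (r : Fin n) (g : ∀ v : Fin n, Fin (csize n r v)) :
    Fin n → Option (Fin n) :=
  fun v => if h : v = r then none else some (decode r v h (g v))

lemma treeP_local {n : ℕ} (r : Fin n) (g : ∀ v : Fin n, Fin (csize n r v)) :
    ∀ v u, treeP r g v = some u → (treeP r g u = none ∨ u < v) := by
  intro v u hv
  unfold treeP at hv ⊢
  split_ifs at hv with h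
  · rcases decode_spec r v h (g v) with hs | hs
    · simp only [Option.some.injEq] at hv
      subst hv
      rw [hs, dif_pos rfl]
      exact Or.inl rfl
    · simp only [Option.some.injEq] at hv
      subst hv
      exact Or.inr hs

def fTree {n : ℕ} (c : Code n) :
    {F : RForest n // F.IsTree ∧ AvoidsSet F S3} := by
  refine ⟨⟨treeP c.1 c.2, acyclic_of_local _ (treeP_local c.1 c.2)⟩, ⟨c.1, ?_, ?_⟩, ?_⟩
  · simp [treeP]
  · intro y hy
    by_contra hne
    simp only [treeP, dif_neg hne] at hy
    exact absurd hy (Option.some_ne_none _)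
  · refine (avoids_iff _).2 (good_of_local _ (treeP_local c.1 c.2))

lemma fTree_bij {n : ℕ} : Function.Bijective (fTree (n := n)) := by
  constructor
  · rintro ⟨r1, g1⟩ ⟨r2, g2⟩ heq
    have hpar : treeP r1 g1 = treeP r2 g2 := congrArg (fun x => x.1.parent) heq
    have hr : r1 = r2 := by
      have h1 : treeP r2 g2 r1 = none := by rw [← hpar]; simp [treeP]
      by_contra hne
      simp only [treeP, dif_neg hne] at h1
      exact absurd h1 (Option.some_ne_none _)
    subst hr
    have hg : g1 = g2 := by
      funext v
      by_cases h : v = r1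
      · subst h
        apply Fin.ext
        have h1 := (g1 v).isLt
        have h2 := (g2 v).isLt
        have h3 := csize_self v
        omega
      · have h1 : treeP r1 g1 v = treeP r1 g2 v := by rw [hpar]
        simp only [treeP, dif_neg h, Option.some.injEq] at h1
        calc g1 v = encode r1 v (decode r1 v h (g1 v)) h (decode_spec r1 v h (g1 v)) :=
                (encode_decode r1 v h (g1 v)).symm
          _ = encode r1 v (decode r1 v h (g2 v)) h (decode_spec r1 v h (g2 v)) :=
                encode_congr h _ _ h1
          _ = g2 v := encode_decode r1 v h (g2 v)
    subst hg; rfl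
  · rintro ⟨F, hT, hA⟩
    obtain ⟨r, hr, hru⟩ := hT
    have good := (avoids_iff F).1 hA
    have loc := local_of_good F good
    have hsome : ∀ v : Fin n, ¬ v = r → ∃ u, F.parent v = some u ∧ (u = r ∨ u < v) := by
      intro v hv
      rcases hp : F.parent v with _ | u
      · exact absurd (hru v hp) hv
      · refine ⟨u, rfl, ?_⟩
        rcases loc v u hp with h | h
        · exact Or.inl (hru u h)
        · exact Or.inr h
    refine ⟨⟨r, fun v => if h : v = r then ⟨0, by rw [h, csize_self]; omega⟩
        else encode r v (hsome v h).choose h (hsome v h).choose_spec.2⟩, ?_⟩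
    apply Subtype.ext
    apply rfext
    funext v
    show treeP r _ v = F.parent v
    by_cases h : v = r
    · subst h; rw [hr]; simp [treeP]
    · simp only [treeP, dif_neg h]
      rw [decode_encode]
      exact (hsome v h).choose_spec.1.symm

lemma prod_fk (N k : ℕ) (hk : k < N) :
    (∏ i ∈ Finset.range N, (if i = k then 1 else if k < i then i else i + 1))
      = (N - 1).factorial := by
  induction N with
  | zero => omega
  | succ N ih =>
    rw [Finset.prod_range_succ]
    rcases Nat.lt_succ_iff_lt_or_eq.1 hk with h | h
    · rw [ih h]
      have h1 : N ≠ k := by omega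
      have h2 : k < N := h
      simp only [if_neg h1, if_pos h2, Nat.succ_sub_one]
      have h3 : N - 1 + 1 = N := by omega
      rw [← h3, Nat.factorial_succ, h3, Nat.mul_comm]
    · subst h
      have he : (if k = k then 1 else if k < k then k else k + 1) = 1 := if_pos rfl
      rw [he, Nat.mul_one, Nat.succ_sub_one, ← Finset.prod_range_add_one_eq_factorial]
      refine Finset.prod_congr rfl (fun i hi => ?_)
      have hi' := Finset.mem_range.1 hi
      rw [if_neg (by omega), if_neg (by omega)]

lemma prod_csize (n : ℕ) (r : Fin n) :
    (∏ v : Fin n, csize n r v) = (n - 1).factorial := by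
  have key : ∀ v : Fin n,
      csize n r v = (if (v:ℕ) = r.val then 1 else if r.val < (v:ℕ) then (v:ℕ) else (v:ℕ) + 1) := by
    intro v
    simp only [csize, Fin.ext_iff, Fin.lt_def]
  calc (∏ v : Fin n, csize n r v)
      = ∏ v : Fin n, (if (v:ℕ) = r.val then 1 else if r.val < (v:ℕ) then (v:ℕ) else (v:ℕ) + 1) :=
        Finset.prod_congr rfl (fun v _ => key v)
    _ = ∏ i ∈ Finset.range n, (if i = r.val then 1 else if r.val < i then i else i + 1) :=
        Fin.prod_univ_eq_prod_range (fun i : ℕ => if i = r.val then 1 else if r.val < i then i else i + 1) n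
    _ = (n - 1).factorial := prod_fk n r.val r.isLt

lemma tcount_eq (n : ℕ) (hn : 1 ≤ n) :
    Nat.card {F : RForest n // F.IsTree ∧ AvoidsSet F S3} = n.factorial := by
  rw [← Nat.card_eq_of_bijective _ (fTree_bij (n := n))]
  have h1 : Nat.card (Code n) = Nat.card (Σ r : Fin n, ∀ v : Fin n, Fin (csize n r v)) := rfl
  rw [h1, Nat.card_eq_fintype_card, Fintype.card_sigma]
  have h2 : ∀ r : Fin n, Fintype.card (∀ v : Fin n, Fin (csize n r v)) = (n-1).factorial := by
    intro r
    rw [Fintype.card_pi]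
    simp only [Fintype.card_fin]
    exact prod_csize n r
  rw [Finset.sum_congr rfl (fun r _ => h2 r), Finset.sum_const, Finset.card_univ,
    Fintype.card_fin, smul_eq_mul]
  cases n with
  | zero => omega
  | succ m => simp [Nat.factorial_succ]

/-! ### Forest upper bound -/

def fsize (n : ℕ) (R : Finset (Fin n)) (v : Fin n) : ℕ := if v ∈ R then 1 else R.card + v.val

def rootsF {n : ℕ} (F : RForest n) : Finset (Fin n) :=
  Finset.univ.filter (fun v => F.parent v = none)

lemma mem_rootsF {n : ℕ} (F : RForest n) (v : Fin n) :
    v ∈ rootsF F ↔ F.parent v = none := by simp [rootsF]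

def idxR {n : ℕ} (R : Finset (Fin n)) (u : Fin n) (hu : u ∈ R) : ℕ :=
  ((R.orderIsoOfFin rfl).symm ⟨u, hu⟩ : Fin R.card).val

lemma idxR_lt {n : ℕ} (R : Finset (Fin n)) (u : Fin n) (hu : u ∈ R) : idxR R u hu < R.card :=
  ((R.orderIsoOfFin rfl).symm ⟨u, hu⟩).isLt

lemma idxR_inj {n : ℕ} (R : Finset (Fin n)) {u u' : Fin n} (hu : u ∈ R) (hu' : u' ∈ R)
    (h : idxR R u hu = idxR R u' hu') : u = u' := by
  have h2 : ((R.orderIsoOfFin rfl).symm ⟨u, hu⟩) = ((R.orderIsoOfFin rfl).symm ⟨u', hu'⟩) :=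
    Fin.ext h
  have h3 := congrArg (fun x => ((R.orderIsoOfFin rfl) x : Fin n)) h2
  simpa using h3

lemma forest_some {n : ℕ} (F : RForest n) (hA : AvoidsSet F S3) (v : Fin n)
    (hv : ¬ v ∈ rootsF F) : ∃ u, F.parent v = some u ∧ (u ∈ rootsF F ∨ u.val < v.val) := by
  rw [mem_rootsF] at hv
  rcases hp : F.parent v with _ | u
  · exact absurd hp hv
  · refine ⟨u, rfl, ?_⟩
    rcases local_of_good F ((avoids_iff F).1 hA) v u hp with h | h
    · exact Or.inl ((mem_rootsF F u).2 h)
    · exact Or.inr h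

def fencVal {n : ℕ} (R : Finset (Fin n)) (u : Fin n) : ℕ :=
  if hu : u ∈ R then idxR R u hu else R.card + u.val

lemma fencVal_inj {n : ℕ} (R : Finset (Fin n)) {u1 u2 : Fin n}
    (h : fencVal R u1 = fencVal R u2) : u1 = u2 := by
  unfold fencVal at h
  split_ifs at h with a b b
  · exact idxR_inj R a b h
  · have := idxR_lt R u1 a
    omega
  · have := idxR_lt R u2 b
    omega
  · exact Fin.ext (by omega)

lemma fencVal_lt {n : ℕ} (R : Finset (Fin n)) {u v : Fin n}
    (hu : u ∈ R ∨ u.val < v.val) : fencVal R u < R.card + v.val := by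
  unfold fencVal
  split_ifs with a
  · have := idxR_lt R u a
    omega
  · have := hu.resolve_left a
    omega

noncomputable def fenc {n : ℕ} (F : {F : RForest n // AvoidsSet F S3}) :
    Σ R : Finset (Fin n), ∀ v : Fin n, Fin (fsize n R v) :=
  ⟨rootsF F.1, fun v =>
    if h : v ∈ rootsF F.1 then ⟨0, by simp [fsize, h]⟩
    else ⟨fencVal (rootsF F.1) (forest_some F.1 F.2 v h).choose, by
      simp only [fsize, if_neg h]
      exact fencVal_lt _ (forest_some F.1 F.2 v h).choose_spec.2⟩⟩

lemma fenc_inj {n : ℕ} : Function.Injective (fenc (n := n)) := by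
  intro F1 F2 heq
  have hR : rootsF F1.1 = rootsF F2.1 := congrArg Sigma.fst heq
  have hval : ∀ v : Fin n, ((fenc F1).2 v).val = ((fenc F2).2 v).val := by
    intro v
    exact congrArg (fun p : Σ R : Finset (Fin n), ∀ v : Fin n, Fin (fsize n R v) =>
      ((p.2 v).val)) heq
  apply Subtype.ext
  apply rfext
  funext v
  by_cases h1 : v ∈ rootsF F1.1
  · rw [(mem_rootsF F1.1 v).1 h1, ((mem_rootsF F2.1 v).1 (hR ▸ h1)).symm]
  · have h2 : ¬ v ∈ rootsF F2.1 := fun h => h1 (hR ▸ h)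
    have hv := hval v
    simp only [fenc, dif_neg h1, dif_neg h2] at hv
    have s1 := (forest_some F1.1 F1.2 v h1).choose_spec.1
    have s2 := (forest_some F2.1 F2.2 v h2).choose_spec.1
    generalize hg1 : (forest_some F1.1 F1.2 v h1).choose = c1 at hv s1
    generalize hg2 : (forest_some F2.1 F2.2 v h2).choose = c2 at hv s2
    rw [← hR] at hv
    rw [s1, s2, fencVal_inj _ hv]

def Pnk (n k : ℕ) : ℕ := ∏ i ∈ Finset.range (n - k), (2*k + i)

lemma emb_bound {m n : ℕ} (e : Fin m → Fin n) (he : StrictMono e) (i : Fin m) :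
    (e i).val ≤ n - m + i.val := by
  have aux : ∀ (d : ℕ) (j : Fin m) (h : j.val + d < m),
      (e j).val + d ≤ (e ⟨j.val + d, h⟩).val := by
    intro d
    induction d with
    | zero => intro j h; simp
    | succ d ih =>
      intro j h
      have h1 : j.val + d < m := by omega
      have h2 := ih j h1
      have h3 : (⟨j.val + d, h1⟩ : Fin m) < ⟨j.val + (d + 1), h⟩ := by
        simp [Fin.lt_def]
      have h4 : (e ⟨j.val + d, h1⟩).val < (e ⟨j.val + (d + 1), h⟩).val := he h3
      omega
  have hm : i.val < m := i.isLt
  have hm1 : m - 1 < m := by omega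
  have hpf : i.val + (m - 1 - i.val) < m := by omega
  have h1 := aux (m - 1 - i.val) i hpf
  have h2 : (e ⟨i.val + (m - 1 - i.val), hpf⟩).val = (e ⟨m - 1, hm1⟩).val :=
    congrArg (fun x => (e x).val)
      (Fin.ext (show i.val + (m - 1 - i.val) = m - 1 by omega))
  rw [h2] at h1
  have h3 := (e ⟨m - 1, hm1⟩).isLt
  omega

lemma prod_A_le {n : ℕ} (k : ℕ) (A : Finset (Fin n)) :
    (∏ v ∈ A, (k + v.val)) ≤ ∏ i ∈ Finset.range A.card, (k + (n - A.card) + i) := by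
  classical
  set m := A.card with hm
  let e := A.orderEmbOfFin hm.symm
  have h1 : (∏ v ∈ A, (k + v.val)) = ∏ i : Fin m, (k + (e i).val) := by
    refine (Finset.prod_bij (fun i _ => e i) ?_ ?_ ?_ ?_).symm
    · intro i _; exact Finset.orderEmbOfFin_mem A hm.symm i
    · intro i _ j _ h; exact e.injective h
    · intro a ha
      have : a ∈ Set.range e := by
        rw [Finset.range_orderEmbOfFin]; exact ha
      obtain ⟨i, hi⟩ := this
      exact ⟨i, Finset.mem_univ i, hi⟩
    · intro i _; rfl
  rw [h1, ← Fin.prod_univ_eq_prod_range (fun i => k + (n - m) + i) m]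
  apply Finset.prod_le_prod'
  intro i _
  have := emb_bound e (A.orderEmbOfFin hm.symm).strictMono i
  omega

lemma prod_fsize_le {n : ℕ} (R : Finset (Fin n)) :
    (∏ v : Fin n, fsize n R v) ≤ Pnk n R.card := by
  classical
  have h1 : (∏ v : Fin n, fsize n R v) = ∏ v ∈ Rᶜ, (R.card + v.val) := by
    unfold fsize
    rw [Finset.prod_ite]
    simp only [Finset.prod_const_one, one_mul]
    congr 1
    ext v
    simp [Finset.mem_compl]
  have h2 : Rᶜ.card = n - R.card := by
    rw [Finset.card_compl, Fintype.card_fin]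
  have h3 : R.card ≤ n := by
    simpa using Finset.card_le_card (Finset.subset_univ R)
  rw [h1]
  calc (∏ v ∈ Rᶜ, (R.card + v.val))
      ≤ ∏ i ∈ Finset.range Rᶜ.card, (R.card + (n - Rᶜ.card) + i) := prod_A_le R.card Rᶜ
    _ = Pnk n R.card := by
        unfold Pnk
        rw [h2]
        refine Finset.prod_congr rfl (fun i _ => by omega)

lemma fcount_le_sum (n : ℕ) :
    Nat.card {F : RForest n // AvoidsSet F S3}
      ≤ ∑ k ∈ Finset.range (n+1), n.choose k * Pnk n k := by
  classical
  calc Nat.card {F : RForest n // AvoidsSet F S3}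
      ≤ Nat.card (Σ R : Finset (Fin n), ∀ v : Fin n, Fin (fsize n R v)) :=
        Nat.card_le_card_of_injective _ fenc_inj
    _ = ∑ R : Finset (Fin n), ∏ v : Fin n, fsize n R v := by
        rw [Nat.card_eq_fintype_card, Fintype.card_sigma]
        refine Finset.sum_congr rfl (fun R _ => ?_)
        rw [Fintype.card_pi]
        simp [Fintype.card_fin]
    _ ≤ ∑ R : Finset (Fin n), Pnk n R.card :=
        Finset.sum_le_sum (fun R _ => prod_fsize_le R)
    _ = ∑ k ∈ Finset.range (n+1), ∑ R ∈ Finset.powersetCard k (Finset.univ : Finset (Fin n)),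
          Pnk n R.card := by
        rw [← Finset.powerset_univ, Finset.powerset_card_disjiUnion]
        erw [Finset.sum_disjiUnion]
        simp
    _ ≤ ∑ k ∈ Finset.range (n+1), n.choose k * Pnk n k := by
        refine Finset.sum_le_sum (fun k _ => ?_)
        have h1 : ∀ R ∈ Finset.powersetCard k (Finset.univ : Finset (Fin n)),
            Pnk n R.card = Pnk n k := by
          intro R hR
          rw [(Finset.mem_powersetCard.1 hR).2]
        rw [Finset.sum_congr rfl h1, Finset.sum_const, Finset.card_powersetCard,
          Finset.card_univ, Fintype.card_fin, smul_eq_mul]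

lemma prod_shift_fact (a m : ℕ) :
    (∏ i ∈ Finset.range m, (a + 1 + i)) * a.factorial = (a + m).factorial := by
  induction m with
  | zero => simp
  | succ m ih =>
    rw [Finset.prod_range_succ, mul_right_comm, ih]
    have : a + (m+1) = (a + m) + 1 := by omega
    rw [this, Nat.factorial_succ]
    ring

lemma Pnk_zero (n : ℕ) (hn : 1 ≤ n) : Pnk n 0 = 0 := by
  unfold Pnk
  refine Finset.prod_eq_zero (Finset.mem_range.2 (by omega : 0 < n - 0)) (by omega)

lemma term_le (n k : ℕ) (h1 : 1 ≤ k) (h2 : k ≤ n) :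
    n.choose k * Pnk n k * (k.factorial)^3 ≤ n.factorial * (2*n^2)^k * (2*n) := by
  have hCk : n.choose k * k.factorial ≤ n ^ k := by
    rw [Nat.mul_comm, ← Nat.descFactorial_eq_factorial_mul_choose]
    exact Nat.descFactorial_le_pow n k
  have hkk : k.factorial * k.factorial ≤ (2*k).factorial := by
    have hd := Nat.factorial_mul_factorial_dvd_factorial_add k k
    have h2k : k + k = 2*k := by ring
    rw [h2k] at hd
    exact Nat.le_of_dvd (Nat.factorial_pos _) hd
  have h2kf : (2*k).factorial = (2*k) * (2*k-1).factorial := by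
    have he : 2*k = (2*k-1) + 1 := by omega
    rw [he, Nat.factorial_succ]
    rw [← he]
  have hP : Pnk n k * (2*k-1).factorial = (n+k-1).factorial := by
    calc Pnk n k * (2*k-1).factorial
        = (∏ i ∈ Finset.range (n-k), ((2*k-1) + 1 + i)) * (2*k-1).factorial := by
          unfold Pnk
          rw [Finset.prod_congr rfl (fun i _ => by omega : ∀ i ∈ Finset.range (n-k), 2*k + i = (2*k-1) + 1 + i)]
      _ = ((2*k-1) + (n-k)).factorial := prod_shift_fact (2*k-1) (n-k)
      _ = (n+k-1).factorial := by congr 1; omega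
  have hfact : (n+k-1).factorial ≤ n.factorial * (2*n)^k := by
    calc (n+k-1).factorial = (n + (k-1)).factorial := by congr 1; omega
      _ = (∏ i ∈ Finset.range (k-1), (n+1+i)) * n.factorial := (prod_shift_fact n (k-1)).symm
      _ ≤ (2*n)^(k-1) * n.factorial := by
          apply Nat.mul_le_mul_right
          have := Finset.prod_le_pow_card (Finset.range (k-1)) (fun i => n+1+i) (2*n)
            (fun i hi => by
              have := Finset.mem_range.1 hi
              show n + 1 + i ≤ 2*n
              omega)
          simpa using this
      _ ≤ (2*n)^k * n.factorial := by
          apply Nat.mul_le_mul_right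
          exact Nat.pow_le_pow_right (by omega) (by omega)
      _ = n.factorial * (2*n)^k := Nat.mul_comm _ _
  calc n.choose k * Pnk n k * (k.factorial)^3
      = (n.choose k * k.factorial) * (Pnk n k * (k.factorial * k.factorial)) := by ring
    _ ≤ n^k * (Pnk n k * (2*k).factorial) := Nat.mul_le_mul hCk (Nat.mul_le_mul_left _ hkk)
    _ = (n^k * (2*k)) * (Pnk n k * (2*k-1).factorial) := by rw [h2kf]; ring
    _ = (n^k * (2*k)) * (n+k-1).factorial := by rw [hP]
    _ ≤ (n^k * (2*n)) * (n.factorial * (2*n)^k) :=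
        Nat.mul_le_mul (Nat.mul_le_mul_left _ (by omega)) hfact
    _ = n.factorial * (n^k * (2*n)^k) * (2*n) := by ring
    _ = n.factorial * (2*n^2)^k * (2*n) := by
        congr 2
        rw [← Nat.mul_pow]
        congr 1
        ring

/-! ### Real bounds -/

open Real Filter Topology

noncomputable def xq (n : ℕ) : ℝ := (2*(n:ℝ)^2) ^ ((3:ℝ)⁻¹)

lemma xq_nonneg (n : ℕ) : 0 ≤ xq n := Real.rpow_nonneg (by positivity) _

lemma xq_cube (n : ℕ) : xq n ^ (3:ℕ) = 2*(n:ℝ)^2 := by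
  unfold xq
  rw [← Real.rpow_natCast ((2*(n:ℝ)^2) ^ ((3:ℝ)⁻¹)) 3, ← Real.rpow_mul (by positivity)]
  norm_num

lemma pow_div_fact_le_exp {x : ℝ} (hx : 0 ≤ x) (k : ℕ) :
    x^k / (k.factorial : ℝ) ≤ Real.exp x := by
  refine le_trans ?_ (Real.sum_le_exp_of_nonneg hx (k+1))
  exact Finset.single_le_sum (f := fun i => x^i / (i.factorial : ℝ))
    (fun i _ => by positivity) (Finset.self_mem_range_succ k)

lemma sum_cube_le {x : ℝ} (hx : 0 ≤ x) (N : ℕ) :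
    ∑ k ∈ Finset.range N, (x^k / (k.factorial:ℝ))^3 ≤ Real.exp x ^ 3 := by
  calc ∑ k ∈ Finset.range N, (x^k / (k.factorial:ℝ))^3
      ≤ ∑ k ∈ Finset.range N, (x^k / (k.factorial:ℝ)) * Real.exp x^2 := by
        refine Finset.sum_le_sum (fun k _ => ?_)
        have h1 := pow_div_fact_le_exp hx k
        have h2 : (0:ℝ) ≤ x^k / (k.factorial:ℝ) := by positivity
        have h3 : (x^k / (k.factorial:ℝ))^2 ≤ Real.exp x ^ 2 := by
          exact pow_le_pow_left₀ h2 h1 2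
        calc (x^k / (k.factorial:ℝ))^3 = (x^k / (k.factorial:ℝ)) * (x^k / (k.factorial:ℝ))^2 := by
              ring
          _ ≤ (x^k / (k.factorial:ℝ)) * Real.exp x ^ 2 := mul_le_mul_of_nonneg_left h3 h2
    _ = (∑ k ∈ Finset.range N, x^k / (k.factorial:ℝ)) * Real.exp x^2 :=
        (Finset.sum_mul _ _ _).symm
    _ ≤ Real.exp x * Real.exp x^2 := by
        refine mul_le_mul_of_nonneg_right (Real.sum_le_exp_of_nonneg hx N) (by positivity)
    _ = Real.exp x ^ 3 := by ring

lemma fcount_real_le (n : ℕ) (hn : 1 ≤ n) :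
    (Nat.card {F : RForest n // AvoidsSet F S3} : ℝ)
      ≤ (n.factorial : ℝ) * (2*n) * Real.exp (xq n) ^ 3 := by
  have hsum := fcount_le_sum n
  have hcast : (Nat.card {F : RForest n // AvoidsSet F S3} : ℝ)
      ≤ ∑ k ∈ Finset.range (n+1), ((n.choose k * Pnk n k : ℕ) : ℝ) := by
    rw [← Nat.cast_sum]
    exact_mod_cast hsum
  refine hcast.trans ?_
  have hterm : ∀ k ∈ Finset.range (n+1),
      ((n.choose k * Pnk n k : ℕ) : ℝ)
        ≤ (n.factorial : ℝ) * (2*n) * ((xq n)^k / (k.factorial:ℝ))^3 := by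
    intro k hk
    have hkn : k ≤ n := by
      have := Finset.mem_range.1 hk; omega
    rcases Nat.eq_zero_or_pos k with rfl | hk1
    · rw [Pnk_zero n hn]
      simp only [Nat.mul_zero, Nat.cast_zero]
      positivity
    · have h1 := term_le n k hk1 hkn
      have h2 : ((n.choose k * Pnk n k : ℕ) : ℝ) * ((k.factorial : ℝ))^3
          ≤ (n.factorial : ℝ) * (2*(n:ℝ)^2)^k * (2*n) := by
        calc ((n.choose k * Pnk n k : ℕ) : ℝ) * ((k.factorial : ℝ))^3
            = ((n.choose k * Pnk n k * (k.factorial)^3 : ℕ) : ℝ) := by push_cast; ring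
          _ ≤ ((n.factorial * (2*n^2)^k * (2*n) : ℕ) : ℝ) := by exact_mod_cast h1
          _ = (n.factorial : ℝ) * (2*(n:ℝ)^2)^k * (2*n) := by push_cast; ring
      have hfp : (0:ℝ) < ((k.factorial : ℝ))^3 := by positivity
      rw [← xq_cube n] at h2
      calc ((n.choose k * Pnk n k : ℕ) : ℝ)
          = ((n.choose k * Pnk n k : ℕ) : ℝ) * ((k.factorial : ℝ))^3 / ((k.factorial : ℝ))^3 := by
            field_simp
        _ ≤ ((n.factorial : ℝ) * (xq n ^ (3:ℕ))^k * (2*n)) / ((k.factorial : ℝ))^3 := by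
            gcongr
        _ = (n.factorial : ℝ) * (2*n) * ((xq n)^k / (k.factorial:ℝ))^3 := by
            rw [div_pow, ← pow_mul, ← pow_mul]
            ring
  calc (∑ k ∈ Finset.range (n+1), ((n.choose k * Pnk n k : ℕ) : ℝ))
      ≤ ∑ k ∈ Finset.range (n+1),
          (n.factorial : ℝ) * (2*n) * ((xq n)^k / (k.factorial:ℝ))^3 :=
        Finset.sum_le_sum hterm
    _ = (n.factorial : ℝ) * (2*n) * ∑ k ∈ Finset.range (n+1), ((xq n)^k / (k.factorial:ℝ))^3 := by
        rw [Finset.mul_sum]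
    _ ≤ (n.factorial : ℝ) * (2*n) * Real.exp (xq n) ^ 3 := by
        refine mul_le_mul_of_nonneg_left (sum_cube_le (xq_nonneg n) (n+1)) (by positivity)

lemma fact_lower (n : ℕ) : ((n:ℝ)/Real.exp 1)^n ≤ (n.factorial : ℝ) := by
  have h1 : (n:ℝ)^n / (n.factorial : ℝ) ≤ Real.exp n := pow_div_fact_le_exp (by positivity) n
  have h2 : Real.exp (n:ℝ) = Real.exp 1 ^ n := by
    rw [← Real.exp_nat_mul]; norm_num
  have hf : (0:ℝ) < (n.factorial : ℝ) := by exact_mod_cast Nat.factorial_pos n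
  have he : (0:ℝ) < Real.exp 1 ^ n := by positivity
  rw [div_pow, div_le_iff₀ he]
  rw [div_le_iff₀ hf, h2] at h1
  calc (n:ℝ)^n ≤ Real.exp 1 ^ n * (n.factorial:ℝ) := h1
    _ = (n.factorial:ℝ) * Real.exp 1 ^ n := by ring

lemma exp_le_pow_succ (n : ℕ) (hn : 1 ≤ n) :
    Real.exp 1 * (n:ℝ)^(n+1) ≤ ((n:ℝ)+1)^(n+1) := by
  have hn' : (0:ℝ) < n := by exact_mod_cast hn
  have h1 : (1:ℝ) - 1/((n:ℝ)+1) ≤ Real.exp (-(1/((n:ℝ)+1))) := by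
    have := Real.add_one_le_exp (-(1/((n:ℝ)+1)))
    linarith
  have h2 : (1:ℝ) - 1/((n:ℝ)+1) = (n:ℝ)/((n:ℝ)+1) := by
    field_simp
    ring
  have h3 : ((n:ℝ)/((n:ℝ)+1))^(n+1) ≤ Real.exp (-(1/((n:ℝ)+1)))^(n+1) := by
    apply pow_le_pow_left₀ (by positivity) (h2 ▸ h1)
  have h4 : Real.exp (-(1/((n:ℝ)+1)))^(n+1) = Real.exp (-1) := by
    rw [← Real.exp_nat_mul]
    congr 1
    field_simp
    norm_num
  have h5 : Real.exp 1 * ((n:ℝ)/((n:ℝ)+1))^(n+1) ≤ 1 := by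
    rw [h4] at h3
    calc Real.exp 1 * ((n:ℝ)/((n:ℝ)+1))^(n+1) ≤ Real.exp 1 * Real.exp (-1) :=
          mul_le_mul_of_nonneg_left h3 (Real.exp_pos 1).le
      _ = 1 := by rw [← Real.exp_add]; norm_num
  have h6 : ((n:ℝ)/((n:ℝ)+1))^(n+1) * ((n:ℝ)+1)^(n+1) = (n:ℝ)^(n+1) := by
    rw [div_pow]
    field_simp
  calc Real.exp 1 * (n:ℝ)^(n+1) = Real.exp 1 * ((n:ℝ)/((n:ℝ)+1))^(n+1) * ((n:ℝ)+1)^(n+1) := by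
        rw [mul_assoc, h6]
    _ ≤ 1 * ((n:ℝ)+1)^(n+1) := mul_le_mul_of_nonneg_right h5 (by positivity)
    _ = ((n:ℝ)+1)^(n+1) := one_mul _

lemma step_alg (n : ℕ) (E x : ℝ) (hE : 0 < E) (hx : 0 < x)
    (key : E * x^(n+1) ≤ (x+1)^(n+1)) :
    (x+1) * (E * x * (x/E)^n) ≤ E * (x+1) * ((x+1)/E)^(n+1) := by
  have hxne : x + 1 ≠ 0 := by positivity
  have hEne : E ≠ 0 := ne_of_gt hE
  have h1 : (x+1) * (E * x * (x/E)^n) = ((x+1) * (E * x^(n+1))) / E^n := by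
    rw [div_pow, div_eq_mul_inv, div_eq_mul_inv]
    ring
  have h2 : E * (x+1) * ((x+1)/E)^(n+1) = ((x+1) * (x+1)^(n+1)) / E^n := by
    rw [div_pow, pow_succ E, div_eq_mul_inv, mul_inv, div_eq_mul_inv,
      show E * (x+1) * ((x+1)^(n+1) * ((E^n)⁻¹ * E⁻¹))
        = (E * E⁻¹) * ((x+1) * (x+1)^(n+1) * (E^n)⁻¹) from by ring,
      mul_inv_cancel₀ hEne, one_mul]
  rw [h1, h2]
  exact (div_le_div_iff_of_pos_right (by positivity)).2
    (mul_le_mul_of_nonneg_left key (by positivity))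

lemma fact_upper (n : ℕ) (hn : 1 ≤ n) :
    (n.factorial : ℝ) ≤ Real.exp 1 * n * ((n:ℝ)/Real.exp 1)^n := by
  induction n, hn using Nat.le_induction with
  | base =>
    simp only [Nat.factorial_one, Nat.cast_one]
    rw [pow_one, mul_one, mul_one_div, div_self (ne_of_gt (Real.exp_pos 1))]
  | succ n hn ih =>
    have hn' : (0:ℝ) < n := by exact_mod_cast hn
    have hstep := step_alg n (Real.exp 1) (n:ℝ) (Real.exp_pos 1) hn' (exp_le_pow_succ n hn)
    calc ((n+1).factorial : ℝ) = ((n:ℝ)+1) * (n.factorial:ℝ) := by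
          rw [Nat.factorial_succ]; push_cast; ring
      _ ≤ ((n:ℝ)+1) * (Real.exp 1 * n * ((n:ℝ)/Real.exp 1)^n) :=
          mul_le_mul_of_nonneg_left ih (by positivity)
      _ ≤ Real.exp 1 * ((n:ℝ)+1) * (((n:ℝ)+1)/Real.exp 1)^(n+1) := hstep
      _ = Real.exp 1 * ((n+1:ℕ):ℝ) * (((n+1:ℕ):ℝ)/Real.exp 1)^(n+1) := by push_cast; ring

lemma fcount_ge (n : ℕ) (hn : 1 ≤ n) :
    n.factorial ≤ Nat.card {F : RForest n // AvoidsSet F S3} := by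
  rw [← tcount_eq n hn]
  refine Nat.card_le_card_of_injective
    (fun F => ⟨F.1, F.2.2⟩ : {F : RForest n // F.IsTree ∧ AvoidsSet F S3} →
      {F : RForest n // AvoidsSet F S3}) ?_
  intro a b h
  apply Subtype.ext
  have h2 := congrArg (fun p : {F : RForest n // AvoidsSet F S3} => p.val) h
  simpa using h2

lemma xq_eq (n : ℕ) : xq n = 2 ^ ((3:ℝ)⁻¹) * (n:ℝ) ^ ((2:ℝ)/3) := by
  unfold xq
  rw [Real.mul_rpow (by norm_num) (by positivity)]
  congr 1
  rw [← Real.rpow_natCast (n:ℝ) 2, ← Real.rpow_mul (by positivity)]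
  norm_num

lemma tendsto_xq_inv : Tendsto (fun n : ℕ => xq n * ((n:ℝ))⁻¹) atTop (𝓝 0) := by
  have h1 : Tendsto (fun n : ℕ => 2 ^ ((3:ℝ)⁻¹) * (n:ℝ) ^ (-((3:ℝ)⁻¹))) atTop (𝓝 0) := by
    have h2 := (tendsto_rpow_neg_atTop (by norm_num : (0:ℝ) < 3⁻¹)).comp
      (tendsto_natCast_atTop_atTop (R := ℝ))
    have := h2.const_mul ((2:ℝ) ^ ((3:ℝ)⁻¹))
    simpa using this
  refine Tendsto.congr' ?_ h1
  filter_upwards [eventually_ge_atTop 1] with n hn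
  have hn0 : (0:ℝ) < n := by exact_mod_cast hn
  rw [xq_eq n, mul_assoc]
  congr 1
  rw [← Real.rpow_neg_one (n:ℝ), ← Real.rpow_add hn0]
  norm_num

lemma tendsto_log_inv : Tendsto (fun n : ℕ => Real.log n * ((n:ℝ))⁻¹) atTop (𝓝 0) := by
  have h1 := (Real.isLittleO_log_id_atTop.tendsto_div_nhds_zero).comp
    (tendsto_natCast_atTop_atTop (R := ℝ))
  refine Tendsto.congr (fun n => ?_) h1
  simp [Function.comp, div_eq_mul_inv]

theorem final_tendsto :
    Tendsto (fun n : ℕ =>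
        (Nat.card {F : RForest n // AvoidsSet F S3} : ℝ) ^ ((n:ℝ)⁻¹) / n)
      atTop (𝓝 (Real.exp (-1))) := by
  have hcend : Tendsto (fun n : ℕ =>
      Real.exp ((Real.log 2 + 1 + 2*Real.log n + 3*xq n) * ((n:ℝ))⁻¹)) atTop (𝓝 1) := by
    have ht : Tendsto (fun n : ℕ =>
        (Real.log 2 + 1 + 2*Real.log n + 3*xq n) * ((n:ℝ))⁻¹) atTop (𝓝 0) := by
      have h1 := tendsto_inv_atTop_nhds_zero_nat.const_mul (Real.log 2 + 1)
      have h2 := tendsto_log_inv.const_mul 2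
      have h3 := tendsto_xq_inv.const_mul 3
      have h4 := (h1.add h2).add h3
      simp only [mul_zero, add_zero] at h4
      refine Tendsto.congr (fun n => ?_) h4
      ring
    have := (Real.continuous_exp.tendsto 0).comp ht
    simpa [Function.comp_def] using this
  have hupper : Tendsto (fun n : ℕ => Real.exp (-1) *
      Real.exp ((Real.log 2 + 1 + 2*Real.log n + 3*xq n) * ((n:ℝ))⁻¹))
      atTop (𝓝 (Real.exp (-1))) := by
    have := hcend.const_mul (Real.exp (-1))
    simpa using this
  refine tendsto_of_tendsto_of_tendsto_of_le_of_le'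
    (tendsto_const_nhds : Tendsto (fun _ : ℕ => Real.exp (-1)) atTop (𝓝 (Real.exp (-1))))
    hupper ?_ ?_
  · filter_upwards [eventually_ge_atTop 1] with n hn
    have hn0 : (0:ℝ) < n := by exact_mod_cast hn
    have hnne : (n:ℝ) ≠ 0 := ne_of_gt hn0
    set A := (Nat.card {F : RForest n // AvoidsSet F S3} : ℝ) with hA
    have hfa : ((n:ℝ)/Real.exp 1)^n ≤ A := by
      refine (fact_lower n).trans ?_
      rw [hA]
      exact_mod_cast fcount_ge n hn
    have h2 : (((n:ℝ)/Real.exp 1)^n) ^ ((n:ℝ)⁻¹) ≤ A ^ ((n:ℝ)⁻¹) :=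
      Real.rpow_le_rpow (by positivity) hfa (by positivity)
    have h3 : (((n:ℝ)/Real.exp 1)^n) ^ ((n:ℝ)⁻¹) = (n:ℝ)/Real.exp 1 := by
      rw [← Real.rpow_natCast ((n:ℝ)/Real.exp 1) n, ← Real.rpow_mul (by positivity),
        mul_inv_cancel₀ hnne, Real.rpow_one]
    have h4 : Real.exp (-1) = ((n:ℝ)/Real.exp 1)/n := by
      rw [Real.exp_neg]
      field_simp
    rw [h4]
    rw [h3] at h2
    exact (div_le_div_iff_of_pos_right hn0).2 h2
  · filter_upwards [eventually_ge_atTop 1] with n hn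
    have hn0 : (0:ℝ) < n := by exact_mod_cast hn
    have hnne : (n:ℝ) ≠ 0 := ne_of_gt hn0
    set A := (Nat.card {F : RForest n // AvoidsSet F S3} : ℝ) with hA
    set D := 2 * Real.exp 1 * (n:ℝ)^2 * Real.exp (xq n)^3 with hD
    have hDpos : 0 < D := by rw [hD]; positivity
    have hA2 : A ≤ ((n:ℝ)/Real.exp 1)^n * D := by
      calc A ≤ (n.factorial : ℝ) * (2*n) * Real.exp (xq n) ^ 3 := fcount_real_le n hn
        _ ≤ (Real.exp 1 * n * ((n:ℝ)/Real.exp 1)^n) * (2*n) * Real.exp (xq n) ^ 3 := by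
            refine mul_le_mul_of_nonneg_right (mul_le_mul_of_nonneg_right
              (fact_upper n hn) (by positivity)) (by positivity)
        _ = ((n:ℝ)/Real.exp 1)^n * D := by rw [hD]; ring
    have hApos : (0:ℝ) ≤ A := by rw [hA]; positivity
    have h2 : A ^ ((n:ℝ)⁻¹) ≤ (((n:ℝ)/Real.exp 1)^n * D) ^ ((n:ℝ)⁻¹) :=
      Real.rpow_le_rpow hApos hA2 (by positivity)
    have h3 : (((n:ℝ)/Real.exp 1)^n * D) ^ ((n:ℝ)⁻¹)
        = ((n:ℝ)/Real.exp 1) * D ^ ((n:ℝ)⁻¹) := by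
      rw [Real.mul_rpow (by positivity) hDpos.le]
      congr 1
      rw [← Real.rpow_natCast ((n:ℝ)/Real.exp 1) n, ← Real.rpow_mul (by positivity),
        mul_inv_cancel₀ hnne, Real.rpow_one]
    have hlogD : Real.log D = Real.log 2 + 1 + 2*Real.log n + 3*xq n := by
      rw [hD, Real.log_mul (by positivity) (by positivity),
        Real.log_mul (by positivity) (by positivity),
        Real.log_mul (by positivity) (by positivity),
        Real.log_exp, Real.log_pow, Real.log_pow, Real.log_exp]
      push_cast
      ring
    have h5 : D ^ ((n:ℝ)⁻¹) =
        Real.exp ((Real.log 2 + 1 + 2*Real.log n + 3*xq n) * ((n:ℝ))⁻¹) := by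
      rw [Real.rpow_def_of_pos hDpos, hlogD]
    calc A ^ ((n:ℝ)⁻¹) / n ≤ (((n:ℝ)/Real.exp 1) * D ^ ((n:ℝ)⁻¹)) / n := by
          rw [← h3]
          exact (div_le_div_iff_of_pos_right hn0).2 h2
      _ = Real.exp (-1) * D ^ ((n:ℝ)⁻¹) := by
          rw [Real.exp_neg]
          field_simp
      _ = Real.exp (-1) * Real.exp ((Real.log 2 + 1 + 2*Real.log n + 3*xq n) * ((n:ℝ))⁻¹) := by
          rw [h5]

end RF

/-- For `S = {132, 231, 321}`: `t_n(S) = n!` for every `n ≥ 1`, and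
`lim f_n(S)^{1/n}/n = e⁻¹`. -/
theorem tCount_132_231_321_eq_factorial_and_limit :
    (∀ n : ℕ, 1 ≤ n →
      tCount ({⟨3, p132⟩, ⟨3, p231⟩, ⟨3, p321⟩} : Set ((k : ℕ) × Pattern k)) n
        = n.factorial) ∧
    Filter.Tendsto
      (fun n : ℕ =>
        (fCount ({⟨3, p132⟩, ⟨3, p231⟩, ⟨3, p321⟩} : Set ((k : ℕ) × Pattern k)) n : ℝ)
          ^ ((n : ℝ)⁻¹) / (n : ℝ))
      Filter.atTop (nhds (Real.exp (-1))) := by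
  constructor
  · intro n hn
    exact RF.tcount_eq n hn
  · exact RF.final_tendsto
end

section
/- Let S = {213, 231, 312, 321}. Then t_{k+1}(S) = t_k(S) + f_k(S) for all k ≥ 0 (this is the coefficientwise form of the statement that the exponential generating function T(x) = Σ_{n≥0} t_n(S) x^n/n! satisfies the differential equation T′ = T + e^T with T(0) = 0). -/
/-! ### Auxiliary development -/

section Aux

open Relation

instance inst_s18 {n : ℕ} : Finite (RForest n) :=
  Finite.of_injective (fun F => F.parent) (fun a b h => by cases a; cases b; simpa using h)

lemma RForest.ext' {n : ℕ} {F G : RForest n} (h : F.parent = G.parent) : F = G := by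
  cases F; cases G; simpa using h

/-- The step relation of a parent function. -/
abbrev stepOf {m : ℕ} (g : Fin m → Option (Fin m)) : Fin m → Fin m → Prop :=
  fun a b => g b = some a

variable {k : ℕ}

/-- The parent function obtained by deleting vertex `0`. -/
def dpar (g : Fin (k+1) → Option (Fin (k+1))) (i : Fin k) : Option (Fin k) :=
  (g i.succ).bind fun p => if h : p = 0 then none else some (p.pred h)

lemma dpar_eq_some {g : Fin (k+1) → Option (Fin (k+1))} {i j : Fin k} :
    dpar g j = some i ↔ g j.succ = some i.succ := by
  unfold dpar
  cases hg : g j.succ with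
  | none => simp
  | some p =>
    by_cases hp : p = 0
    · subst hp
      simp [(Fin.succ_ne_zero i).symm]
    · show (if h : p = 0 then none else some (p.pred h)) = some i ↔ some p = some i.succ
      rw [dif_neg hp]
      simp only [Option.some.injEq]
      constructor
      · rintro rfl
        exact (Fin.succ_pred p hp).symm
      · rintro rfl
        exact Fin.pred_succ i

lemma dpar_eq_none {g : Fin (k+1) → Option (Fin (k+1))} {i : Fin k} :
    dpar g i = none ↔ g i.succ = none ∨ g i.succ = some 0 := by
  unfold dpar
  cases hg : g i.succ with
  | none => simp
  | some p =>
    by_cases hp : p = 0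
    · subst hp; simp
    · simp [hp]

lemma trans_dpar_to {g : Fin (k+1) → Option (Fin (k+1))} {i j : Fin k}
    (h : TransGen (stepOf (dpar g)) i j) : TransGen (stepOf g) i.succ j.succ := by
  induction h with
  | single h => exact .single (dpar_eq_some.mp h)
  | tail _ h ih => exact ih.tail (dpar_eq_some.mp h)

lemma exists_parent_of_trans {m : ℕ} {g : Fin m → Option (Fin m)} {u v : Fin m}
    (h : TransGen (stepOf g) u v) : ∃ x, g v = some x := by
  induction h with
  | single h => exact ⟨_, h⟩
  | tail _ h _ => exact ⟨_, h⟩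

lemma not_trans_to_zero {g : Fin (k+1) → Option (Fin (k+1))} (h0 : g 0 = none) {u : Fin (k+1)} :
    ¬ TransGen (stepOf g) u 0 := by
  intro h
  obtain ⟨x, hx⟩ := exists_parent_of_trans h
  simp [h0] at hx

lemma not_trans_from_zero {g : Fin (k+1) → Option (Fin (k+1))}
    (h0 : ∀ c, g c ≠ some 0) {v : Fin (k+1)} : ¬ TransGen (stepOf g) 0 v := by
  intro h
  obtain ⟨b, hb, -⟩ := Relation.TransGen.head'_iff.mp h
  exact h0 _ hb

lemma trans_to_dpar {g : Fin (k+1) → Option (Fin (k+1))}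
    (H : g 0 = none ∨ ∀ c, g c ≠ some 0) {u v : Fin (k+1)}
    (h : TransGen (stepOf g) u v) :
    ∀ i j : Fin k, u = i.succ → v = j.succ → TransGen (stepOf (dpar g)) i j := by
  induction h with
  | single h =>
    rintro i j rfl rfl
    exact .single (dpar_eq_some.mpr h)
  | @tail b c hub hbv ih =>
    rintro i j rfl rfl
    have hb : b ≠ 0 := by
      rintro rfl
      rcases H with H | H
      · obtain ⟨x, hx⟩ := exists_parent_of_trans hub
        simp [H] at hx
      · exact H _ hbv
    obtain ⟨j', rfl⟩ := Fin.exists_succ_eq.mpr hb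
    exact (ih i j' rfl rfl).tail (dpar_eq_some.mpr hbv)

/-- The avoided set of patterns. -/
def S4 : Set ((k : ℕ) × Pattern k) := {⟨3, p213⟩, ⟨3, p231⟩, ⟨3, p312⟩, ⟨3, p321⟩}

/-- Deletion of vertex `0` from a forest on `k+1` vertices. -/
def RForest.del (F : RForest (k+1)) : RForest k where
  parent := dpar F.parent
  acyclic := fun v h => F.acyclic v.succ (trans_dpar_to h)

lemma SAnc_del {F : RForest (k+1)} {i j : Fin k} (h : F.del.SAnc i j) :
    F.SAnc i.succ j.succ := trans_dpar_to h

lemma avoids_del {F : RForest (k+1)} {S : Set ((k : ℕ) × Pattern k)}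
    (hA : AvoidsSet F S) : AvoidsSet F.del S := by
  rintro p hp ⟨v, hanc, hord⟩
  exact hA p hp ⟨fun i => (v i).succ, fun i j hij => SAnc_del (hanc i j hij),
    fun i j => by rw [Fin.succ_lt_succ_iff]; exact hord i j⟩

lemma ne_of_SAnc {n : ℕ} {F : RForest n} {a b : Fin n} (h : F.SAnc a b) : a ≠ b :=
  fun e => F.acyclic b (e ▸ h)

lemma iff_swap {n : ℕ} (π : Pattern 3) {x y : Fin n} {u w : Fin 3} (hxy : x ≠ y) (huw : u ≠ w)
    (h : x < y ↔ π u < π w) : y < x ↔ π w < π u := by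
  have hpi : π u ≠ π w := fun e => huw (π.injective e)
  constructor
  · intro hyx
    rcases lt_or_gt_of_ne hpi with hp | hp
    · exact absurd (h.mpr hp) (lt_asymm hyx)
    · exact hp
  · intro hp
    rcases lt_trichotomy x y with h1 | h1 | h1
    · exact absurd (h.mp h1) (lt_asymm hp)
    · exact absurd h1 hxy
    · exact h1

lemma inst_of_three {n : ℕ} (F : RForest n) (π : Pattern 3) (a b c : Fin n)
    (hab : F.SAnc a b) (hbc : F.SAnc b c) (hac : F.SAnc a c)
    (o01 : a < b ↔ π 0 < π 1) (o02 : a < c ↔ π 0 < π 2) (o12 : b < c ↔ π 1 < π 2) :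
    ContainsPat F π := by
  have o10 := iff_swap π (ne_of_SAnc hab) (by decide) o01
  have o20 := iff_swap π (ne_of_SAnc hac) (by decide) o02
  have o21 := iff_swap π (ne_of_SAnc hbc) (by decide) o12
  refine ⟨![a, b, c], ?_, ?_⟩
  · intro i j hij
    fin_cases i <;> fin_cases j <;>
      first
        | exact absurd hij (by decide)
        | exact hab
        | exact hac
        | exact hbc
  · intro i j
    fin_cases i <;> fin_cases j <;>
      first
        | exact o01
        | exact o02
        | exact o12
        | exact o10
        | exact o20
        | exact o21
        | simp

lemma mem_S4_213 : (⟨3, p213⟩ : (k : ℕ) × Pattern k) ∈ S4 := Set.mem_insert _ _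
lemma mem_S4_231 : (⟨3, p231⟩ : (k : ℕ) × Pattern k) ∈ S4 :=
  Set.mem_insert_of_mem _ (Set.mem_insert _ _)
lemma mem_S4_312 : (⟨3, p312⟩ : (k : ℕ) × Pattern k) ∈ S4 :=
  Set.mem_insert_of_mem _ (Set.mem_insert_of_mem _ (Set.mem_insert _ _))
lemma mem_S4_321 : (⟨3, p321⟩ : (k : ℕ) × Pattern k) ∈ S4 :=
  Set.mem_insert_of_mem _ (Set.mem_insert_of_mem _ (Set.mem_insert_of_mem _ rfl))

/-- If `F` avoids `S4` and `0` has a parent, then `0` is a leaf. -/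
lemma leaf_zero {F : RForest (k+1)} (hA : AvoidsSet F S4) {p : Fin (k+1)}
    (hp : F.parent 0 = some p) : ∀ c, F.parent c ≠ some 0 := by
  intro c hc
  have hp0 : p ≠ 0 := by rintro rfl; exact F.acyclic 0 (.single hp)
  have hc0 : c ≠ 0 := by rintro rfl; exact F.acyclic 0 (.single hc)
  have hcp : c ≠ p := by
    rintro rfl
    exact F.acyclic _ (Relation.TransGen.tail (Relation.TransGen.single hp) hc)
  have a1 : F.SAnc p 0 := .single hp
  have a2 : F.SAnc 0 c := .single hc
  have a3 : F.SAnc p c := a1.tail hc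
  rcases lt_or_gt_of_ne hcp with hlt | hlt
  · -- c < p : pattern 312
    exact hA ⟨3, p312⟩ mem_S4_312 (inst_of_three F p312 p 0 c a1 a2 a3
      (iff_of_false (Fin.not_lt_zero p) (by decide))
      (iff_of_false (lt_asymm hlt) (by decide))
      (iff_of_true (Fin.pos_iff_ne_zero.mpr hc0) (by decide)))
  · -- p < c : pattern 213
    exact hA ⟨3, p213⟩ mem_S4_213 (inst_of_three F p213 p 0 c a1 a2 a3
      (iff_of_false (Fin.not_lt_zero p) (by decide))
      (iff_of_true hlt (by decide))
      (iff_of_true (Fin.pos_iff_ne_zero.mpr hc0) (by decide)))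

/-- If `F` avoids `S4` and `0` has a parent, then that parent is a root. -/
lemma parent_zero_root {F : RForest (k+1)} (hA : AvoidsSet F S4) {p : Fin (k+1)}
    (hp : F.parent 0 = some p) : F.parent p = none := by
  by_contra h
  obtain ⟨g, hg⟩ := Option.ne_none_iff_exists'.mp h
  have hp0 : p ≠ 0 := by rintro rfl; exact F.acyclic 0 (.single hp)
  have hg0 : g ≠ 0 := fun h0 => leaf_zero hA hp p (h0 ▸ hg)
  have hgp : g ≠ p := by rintro rfl; exact F.acyclic _ (.single hg)
  have a1 : F.SAnc g p := .single hg
  have a2 : F.SAnc p 0 := .single hp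
  have a3 : F.SAnc g 0 := a1.tail hp
  rcases lt_or_gt_of_ne hgp with hlt | hlt
  · -- g < p : pattern 231
    exact hA ⟨3, p231⟩ mem_S4_231 (inst_of_three F p231 g p 0 a1 a2 a3
      (iff_of_true hlt (by decide))
      (iff_of_false (Fin.not_lt_zero g) (by decide))
      (iff_of_false (Fin.not_lt_zero p) (by decide)))
  · -- g > p : pattern 321
    exact hA ⟨3, p321⟩ mem_S4_321 (inst_of_three F p321 g p 0 a1 a2 a3
      (iff_of_false (lt_asymm hlt) (by decide))
      (iff_of_false (Fin.not_lt_zero g) (by decide))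
      (iff_of_false (Fin.not_lt_zero p) (by decide)))

lemma tree_del {F : RForest (k+1)} (hT : F.IsTree) (hA : AvoidsSet F S4)
    {p : Fin (k+1)} (hp : F.parent 0 = some p) : F.del.IsTree := by
  obtain ⟨r, hr, hru⟩ := hT
  have hr0 : r ≠ 0 := by rintro rfl; simp [hp] at hr
  obtain ⟨s, rfl⟩ := Fin.exists_succ_eq.mpr hr0
  refine ⟨s, ?_, ?_⟩
  · exact dpar_eq_none.mpr (Or.inl hr)
  · intro i hi
    rcases dpar_eq_none.mp hi with h | h
    · have := hru i.succ h
      exact Fin.succ_injective _ this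
    · exact absurd h (leaf_zero hA hp i.succ)

/-- The two extension parent functions. -/
def psiA (g : Fin k → Option (Fin k)) : Fin (k+1) → Option (Fin (k+1)) :=
  fun v => Fin.cases none (fun i => some ((g i).elim 0 Fin.succ)) v

def psiB (g : Fin k → Option (Fin k)) (r : Fin k) : Fin (k+1) → Option (Fin (k+1)) :=
  fun v => Fin.cases (some r.succ) (fun i => (g i).map Fin.succ) v

lemma psiA_zero {g : Fin k → Option (Fin k)} : psiA g 0 = none := rfl

lemma psiA_succ {g : Fin k → Option (Fin k)} (i : Fin k) :
    psiA g i.succ = some ((g i).elim 0 Fin.succ) := by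
  simp [psiA]

lemma psiB_zero {g : Fin k → Option (Fin k)} {r : Fin k} : psiB g r 0 = some r.succ := rfl

lemma psiB_succ {g : Fin k → Option (Fin k)} {r : Fin k} (i : Fin k) :
    psiB g r i.succ = (g i).map Fin.succ := by
  simp [psiB]

lemma dpar_psiA {g : Fin k → Option (Fin k)} : dpar (psiA g) = g := by
  funext i
  cases hg : g i with
  | none =>
    simp [dpar, psiA_succ, hg]
  | some p =>
    simp [dpar, psiA_succ, hg, Fin.succ_ne_zero, Fin.pred_succ]

lemma dpar_psiB {g : Fin k → Option (Fin k)} {r : Fin k} : dpar (psiB g r) = g := by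
  funext i
  cases hg : g i with
  | none => simp [dpar, psiB_succ, hg]
  | some p => simp [dpar, psiB_succ, hg, Fin.succ_ne_zero, Fin.pred_succ]

lemma psiB_leaf {g : Fin k → Option (Fin k)} {r : Fin k} :
    ∀ c, psiB g r c ≠ some 0 := by
  intro c
  induction c using Fin.cases with
  | zero => simp [psiB_zero, (Fin.succ_ne_zero r)]
  | succ i =>
    rw [psiB_succ]
    cases hg : g i <;> simp [Fin.succ_ne_zero]

end Aux

section Main

open Relation

variable {k : ℕ}

/-- The subtype of avoiding trees. -/
abbrev TS (n : ℕ) := {F : RForest n // F.IsTree ∧ AvoidsSet F S4}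
/-- The subtype of avoiding forests. -/
abbrev FS (n : ℕ) := {F : RForest n // AvoidsSet F S4}

open scoped Classical in
/-- The forward map of the bijection. -/
noncomputable def phi (X : TS (k+1)) : TS k ⊕ FS k :=
  if h : X.1.parent 0 = none then
    Sum.inr ⟨X.1.del, avoids_del X.2.2⟩
  else
    Sum.inl ⟨X.1.del,
      tree_del X.2.1 X.2.2 (Option.ne_none_iff_exists'.mp h).choose_spec,
      avoids_del X.2.2⟩

lemma recover_A {F : RForest (k+1)} (hT : F.IsTree) (h0 : F.parent 0 = none) (i : Fin k) :
    F.parent i.succ = (dpar F.parent i).elim (some 0) (fun m => some m.succ) := by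
  cases hF : F.parent i.succ with
  | none =>
    exfalso
    obtain ⟨r, hr, hru⟩ := hT
    have h1 := hru _ h0
    have h2 := hru _ hF
    exact Fin.succ_ne_zero i (h2.trans h1.symm)
  | some q =>
    by_cases hq : q = 0
    · subst hq
      have : dpar F.parent i = none := dpar_eq_none.mpr (Or.inr hF)
      simp [this]
    · obtain ⟨m, rfl⟩ := Fin.exists_succ_eq.mpr hq
      have : dpar F.parent i = some m := dpar_eq_some.mpr hF
      simp [this]

lemma recover_B {F : RForest (k+1)} (hleaf : ∀ c, F.parent c ≠ some 0) (i : Fin k) :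
    F.parent i.succ = (dpar F.parent i).map Fin.succ := by
  cases hF : F.parent i.succ with
  | none =>
    have : dpar F.parent i = none := dpar_eq_none.mpr (Or.inl hF)
    simp [this]
  | some q =>
    have hq : q ≠ 0 := fun h => hleaf i.succ (h ▸ hF)
    obtain ⟨m, rfl⟩ := Fin.exists_succ_eq.mpr hq
    have : dpar F.parent i = some m := dpar_eq_some.mpr hF
    simp [this]

lemma phi_inj : Function.Injective (phi (k := k)) := by
  rintro ⟨F, hFt, hFa⟩ ⟨G, hGt, hGa⟩ h
  unfold phi at h
  by_cases hF : F.parent 0 = none <;> by_cases hG : G.parent 0 = none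
  · -- both roots at 0
    rw [dif_pos hF, dif_pos hG] at h
    have hd : F.del = G.del := congrArg Subtype.val (Sum.inr_injective h)
    have hdp : dpar F.parent = dpar G.parent := congrArg RForest.parent hd
    refine Subtype.ext (RForest.ext' (funext fun v => ?_))
    induction v using Fin.cases with
    | zero => rw [hF, hG]
    | succ i => rw [recover_A hFt hF i, recover_A hGt hG i, hdp]
  · rw [dif_pos hF, dif_neg hG] at h; exact nomatch h
  · rw [dif_neg hF, dif_pos hG] at h; exact nomatch h
  · -- both have 0 as non-root
    rw [dif_neg hF, dif_neg hG] at h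
    have hd : F.del = G.del := congrArg Subtype.val (Sum.inl_injective h)
    have hdp : dpar F.parent = dpar G.parent := congrArg RForest.parent hd
    obtain ⟨p, hp⟩ := Option.ne_none_iff_exists'.mp hF
    obtain ⟨q, hq⟩ := Option.ne_none_iff_exists'.mp hG
    have hleafF := leaf_zero hFa hp
    have hleafG := leaf_zero hGa hq
    have hsucc : ∀ i : Fin k, F.parent i.succ = G.parent i.succ := by
      intro i
      rw [recover_B hleafF i, recover_B hleafG i, hdp]
    -- roots agree
    obtain ⟨r, hr, hru⟩ := hFt
    have hr0 : r ≠ 0 := by rintro rfl; simp [hp] at hr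
    obtain ⟨s, rfl⟩ := Fin.exists_succ_eq.mpr hr0
    have hpr : p = s.succ := hru p (parent_zero_root hFa hp)
    obtain ⟨r', hr', hru'⟩ := hGt
    have hr0' : r' ≠ 0 := by rintro rfl; simp [hq] at hr'
    obtain ⟨t, rfl⟩ := Fin.exists_succ_eq.mpr hr0'
    have hqr : q = t.succ := hru' q (parent_zero_root hGa hq)
    have hst : t.succ = s.succ := hru t.succ (by show F.parent t.succ = none; rw [hsucc t]; exact hr')
    refine Subtype.ext (RForest.ext' (funext fun v => ?_))
    induction v using Fin.cases with
    | zero => rw [hp, hq, hpr, hqr, hst]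
    | succ i => exact hsucc i

lemma avoids_contra_zero_first {n : ℕ} {π : Pattern 3}
    (hπ : ¬ (π 0 < π 1 ∧ π 0 < π 2)) {v : Fin 3 → Fin n}
    (h1 : v 0 < v 1) (h2 : v 0 < v 2)
    (hord : ∀ i j : Fin 3, v i < v j ↔ π i < π j) : False := by
  exact hπ ⟨(hord 0 1).mp h1, (hord 0 2).mp h2⟩

lemma psiA_acyclic (F' : RForest k) :
    ∀ v : Fin (k+1), ¬ TransGen (stepOf (psiA F'.parent)) v v := by
  intro v h
  rcases Fin.eq_zero_or_eq_succ v with rfl | ⟨i, rfl⟩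
  · exact not_trans_to_zero psiA_zero h
  · have := trans_to_dpar (Or.inl psiA_zero) h i i rfl rfl
    rw [dpar_psiA] at this
    exact F'.acyclic i this

lemma psiB_acyclic (F' : RForest k) (r : Fin k) :
    ∀ v : Fin (k+1), ¬ TransGen (stepOf (psiB F'.parent r)) v v := by
  intro v h
  rcases Fin.eq_zero_or_eq_succ v with rfl | ⟨i, rfl⟩
  · exact not_trans_from_zero psiB_leaf h
  · have := trans_to_dpar (Or.inr psiB_leaf) h i i rfl rfl
    rw [dpar_psiB] at this
    exact F'.acyclic i this

/-- The tree extending a forest by a new root `0`. -/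
def treeA (F' : RForest k) : RForest (k+1) :=
  ⟨psiA F'.parent, psiA_acyclic F'⟩

/-- The tree extending a tree with root `r` by a new leaf `0` below the root. -/
def treeB (F' : RForest k) (r : Fin k) : RForest (k+1) :=
  ⟨psiB F'.parent r, psiB_acyclic F' r⟩

lemma treeA_isTree (F' : RForest k) : (treeA F').IsTree := by
  refine ⟨0, rfl, fun x hx => ?_⟩
  rcases Fin.eq_zero_or_eq_succ x with rfl | ⟨i, rfl⟩
  · rfl
  · have hx' : psiA F'.parent i.succ = none := hx
    rw [psiA_succ] at hx'
    exact nomatch hx'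

lemma treeB_isTree (F' : RForest k) {r : Fin k} (hr : F'.parent r = none)
    (hru : ∀ y, F'.parent y = none → y = r) : (treeB F' r).IsTree := by
  refine ⟨r.succ, ?_, fun x hx => ?_⟩
  · show psiB F'.parent r r.succ = none
    rw [psiB_succ, hr]; rfl
  · rcases Fin.eq_zero_or_eq_succ x with rfl | ⟨i, rfl⟩
    · have hx' : psiB F'.parent r 0 = none := hx
      rw [psiB_zero] at hx'
      exact nomatch hx'
    · have hx0 : psiB F'.parent r i.succ = none := hx
      rw [psiB_succ] at hx0
      have hx' : (F'.parent i).map Fin.succ = none := hx0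
      have hnone : F'.parent i = none := by
        cases h : F'.parent i with
        | none => rfl
        | some q => rw [h] at hx'; simp at hx'
      rw [hru i hnone]

lemma mem_S4_cases {p : (k : ℕ) × Pattern k} (hp : p ∈ S4) :
    p = ⟨3, p213⟩ ∨ p = ⟨3, p231⟩ ∨ p = ⟨3, p312⟩ ∨ p = ⟨3, p321⟩ := by
  simpa [S4] using hp

lemma S4_first_not_min {π : Pattern 3}
    (hπ : (⟨3, π⟩ : (k : ℕ) × Pattern k) ∈ S4) : ¬ (π 0 < π 1 ∧ π 0 < π 2) := by
  rcases mem_S4_cases hπ with h | h | h | h <;>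
  · obtain ⟨-, h2⟩ := Sigma.mk.inj_iff.mp h
    rw [eq_of_heq h2]
    decide

lemma trans_to_zero_psiB {F' : RForest k} {r : Fin k} (hr : F'.parent r = none)
    {u : Fin (k+1)} (h : TransGen (stepOf (psiB F'.parent r)) u 0) : u = r.succ := by
  obtain ⟨b, hub, hb0⟩ := Relation.TransGen.tail'_iff.mp h
  have hb : b = r.succ := by
    have : psiB F'.parent r 0 = some b := hb0
    rw [psiB_zero] at this
    exact (Option.some_injective _ this).symm
  subst hb
  rcases Relation.reflTransGen_iff_eq_or_transGen.mp hub with h' | h'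
  · exact h'.symm
  · exfalso
    have hu0 : u ≠ 0 := fun h0 => not_trans_from_zero psiB_leaf (h0 ▸ h')
    obtain ⟨i, rfl⟩ := Fin.exists_succ_eq.mpr hu0
    have := trans_to_dpar (Or.inr psiB_leaf) h' i r rfl rfl
    rw [dpar_psiB] at this
    obtain ⟨x, hx⟩ := exists_parent_of_trans this
    rw [hr] at hx
    exact nomatch hx

lemma treeA_avoids_aux (F' : RForest k) (hA' : AvoidsSet F' S4) (π : Pattern 3)
    (hπ : (⟨3, π⟩ : (k : ℕ) × Pattern k) ∈ S4) : ¬ ContainsPat (treeA F') π := by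
  rintro ⟨v, hanc, hord⟩
  have hne : ∀ i : Fin 3, i ≠ 0 → v i ≠ 0 := by
    intro i hi hv
    have h := hanc 0 i (Fin.pos_iff_ne_zero.mpr hi)
    rw [hv] at h
    exact not_trans_to_zero psiA_zero h
  by_cases hv0 : v 0 = 0
  · have h1 : v 0 < v 1 := by
      rw [hv0]; exact Fin.pos_iff_ne_zero.mpr (hne 1 (by decide))
    have h2 : v 0 < v 2 := by
      rw [hv0]; exact Fin.pos_iff_ne_zero.mpr (hne 2 (by decide))
    exact avoids_contra_zero_first (S4_first_not_min hπ) h1 h2 hord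
  · have hne' : ∀ i : Fin 3, v i ≠ 0 := by
      intro i
      rcases eq_or_ne i 0 with rfl | hi
      · exact hv0
      · exact hne i hi
    choose w hw using fun i => Fin.exists_succ_eq.mpr (hne' i)
    refine hA' ⟨3, π⟩ hπ ⟨w, fun i j hij => ?_, fun i j => ?_⟩
    · have h := hanc i j hij
      have h2 := trans_to_dpar (Or.inl psiA_zero) h (w i) (w j) (hw i).symm (hw j).symm
      rwa [dpar_psiA] at h2
    · rw [← hord i j, ← hw i, ← hw j, Fin.succ_lt_succ_iff]

lemma treeA_avoids (F' : RForest k) (hA' : AvoidsSet F' S4) :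
    AvoidsSet (treeA F') S4 := by
  intro p hp
  rcases mem_S4_cases hp with rfl | rfl | rfl | rfl
  · exact treeA_avoids_aux F' hA' p213 mem_S4_213
  · exact treeA_avoids_aux F' hA' p231 mem_S4_231
  · exact treeA_avoids_aux F' hA' p312 mem_S4_312
  · exact treeA_avoids_aux F' hA' p321 mem_S4_321

lemma treeB_avoids_aux (F' : RForest k) {r : Fin k} (hr : F'.parent r = none)
    (hA' : AvoidsSet F' S4) (π : Pattern 3)
    (hπ : (⟨3, π⟩ : (k : ℕ) × Pattern k) ∈ S4) : ¬ ContainsPat (treeB F' r) π := by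
  rintro ⟨v, hanc, hord⟩
  have hne : ∀ i : Fin 3, i ≠ 2 → v i ≠ 0 := by
    intro i hi hv
    have hi2 : i < 2 := by
      have h3 := i.isLt
      have hval : i.val ≠ 2 := fun h => hi (Fin.ext h)
      refine Fin.lt_def.mpr ?_
      have h2 : ((2 : Fin 3) : ℕ) = 2 := rfl
      omega
    have h := hanc i 2 hi2
    rw [hv] at h
    exact not_trans_from_zero psiB_leaf h
  by_cases hv2 : v 2 = 0
  · have h12 := hanc 1 2 (by decide)
    rw [hv2] at h12
    have hv1 : v 1 = r.succ := trans_to_zero_psiB hr h12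
    have h01 := hanc 0 1 (by decide)
    rw [hv1] at h01
    have hv00 : v 0 ≠ 0 := hne 0 (by decide)
    obtain ⟨i, hi⟩ := Fin.exists_succ_eq.mpr hv00
    have h2 := trans_to_dpar (Or.inr psiB_leaf) h01 i r hi.symm rfl
    rw [dpar_psiB] at h2
    obtain ⟨x, hx⟩ := exists_parent_of_trans h2
    rw [hr] at hx
    exact nomatch hx
  · have hne' : ∀ i : Fin 3, v i ≠ 0 := by
      intro i
      rcases eq_or_ne i 2 with rfl | hi
      · exact hv2
      · exact hne i hi
    choose w hw using fun i => Fin.exists_succ_eq.mpr (hne' i)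
    refine hA' ⟨3, π⟩ hπ ⟨w, fun i j hij => ?_, fun i j => ?_⟩
    · have h := hanc i j hij
      have h2 := trans_to_dpar (Or.inr psiB_leaf) h (w i) (w j) (hw i).symm (hw j).symm
      rwa [dpar_psiB] at h2
    · rw [← hord i j, ← hw i, ← hw j, Fin.succ_lt_succ_iff]

lemma treeB_avoids (F' : RForest k) {r : Fin k} (hr : F'.parent r = none)
    (hA' : AvoidsSet F' S4) : AvoidsSet (treeB F' r) S4 := by
  intro p hp
  rcases mem_S4_cases hp with rfl | rfl | rfl | rfl
  · exact treeB_avoids_aux F' hr hA' p213 mem_S4_213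
  · exact treeB_avoids_aux F' hr hA' p231 mem_S4_231
  · exact treeB_avoids_aux F' hr hA' p312 mem_S4_312
  · exact treeB_avoids_aux F' hr hA' p321 mem_S4_321

lemma phi_surj : Function.Surjective (phi (k := k)) := by
  rintro (⟨F', ⟨r, hr, hru⟩, hA'⟩ | ⟨F', hA'⟩)
  · -- tree case: use treeB
    refine ⟨⟨treeB F' r, treeB_isTree F' hr hru, treeB_avoids F' hr hA'⟩, ?_⟩
    unfold phi
    split_ifs with h
    · exfalso
      have h' : (some r.succ : Option (Fin (k+1))) = none := h
      exact nomatch h'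
    · congr 1
      refine Subtype.ext (RForest.ext' ?_)
      show dpar (psiB F'.parent r) = F'.parent
      exact dpar_psiB
  · -- forest case: use treeA
    refine ⟨⟨treeA F', treeA_isTree F', treeA_avoids F' hA'⟩, ?_⟩
    unfold phi
    split_ifs with h
    · congr 1
      refine Subtype.ext (RForest.ext' ?_)
      show dpar (psiA F'.parent) = F'.parent
      exact dpar_psiA
    · exact absurd (rfl : (none : Option (Fin (k+1))) = none) h

end Main

/-- For `S = {213, 231, 312, 321}`: `t_{k+1}(S) = t_k(S) + f_k(S)` for all `k ≥ 0`. -/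
theorem tCount_succ_eq_tCount_add_fCount :
    ∀ k : ℕ,
      tCount ({⟨3, p213⟩, ⟨3, p231⟩, ⟨3, p312⟩, ⟨3, p321⟩} : Set ((k : ℕ) × Pattern k))
          (k + 1)
        = tCount ({⟨3, p213⟩, ⟨3, p231⟩, ⟨3, p312⟩, ⟨3, p321⟩} :
            Set ((k : ℕ) × Pattern k)) k
          + fCount ({⟨3, p213⟩, ⟨3, p231⟩, ⟨3, p312⟩, ⟨3, p321⟩} :
              Set ((k : ℕ) × Pattern k)) k := by
  intro k
  have e : TS (k+1) ≃ (TS k ⊕ FS k) := Equiv.ofBijective phi ⟨phi_inj, phi_surj⟩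
  show tCount S4 (k+1) = tCount S4 k + fCount S4 k
  unfold tCount fCount
  rw [Nat.card_congr e, Nat.card_sum]
end

section
/- For every real number c with 0 < c < 1, there exists a positive integer k such that for all sufficiently large n, the number of permutations σ of [n] = {1,…,n} that avoid the consecutive pattern 1 2 ⋯ k — that is, for which there is no index i with 1 ≤ i ≤ n − k + 1 such that σ(i) < σ(i+1) < ⋯ < σ(i+k−1) — is at least c^n · n!. -/
/-- `σ` avoids the consecutive pattern `1 2 ⋯ k`: there is no index `i` such that the
`k` consecutive values `σ(i), σ(i+1), …, σ(i+k-1)` are increasing. -/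
def AvoidsConsIncreasing (n k : ℕ) (σ : Equiv.Perm (Fin n)) : Prop :=
  ¬ ∃ i : ℕ, ∃ h : i + k ≤ n, ∀ j : ℕ, ∀ hj : j + 1 < k,
      σ ⟨i + j, by omega⟩ < σ ⟨i + j + 1, by omega⟩

namespace AvoidAux

variable (n m : ℕ)

/-- `x` is an ascent position at a multiple of `m` for `τ`. -/
def pb (τ : Equiv.Perm (Fin n)) (x : ℕ) : Bool :=
  if h : x + 1 < n then
    decide (x % m = 0 ∧ τ ⟨x, by omega⟩ < τ ⟨x + 1, h⟩)
  else false

lemma pb_lt {τ : Equiv.Perm (Fin n)} {x : ℕ} (h : pb n m τ x = true) : x + 1 < n := by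
  unfold pb at h
  split at h
  · assumption
  · simp at h

lemma pb_mod {τ : Equiv.Perm (Fin n)} {x : ℕ} (h : pb n m τ x = true) : x % m = 0 := by
  unfold pb at h
  split at h
  · simp only [decide_eq_true_eq] at h; exact h.1
  · simp at h

lemma pb_asc {τ : Equiv.Perm (Fin n)} {x : ℕ} (h : pb n m τ x = true) :
    τ ⟨x, by have := pb_lt n m h; omega⟩ < τ ⟨x + 1, pb_lt n m h⟩ := by
  unfold pb at h
  split at h
  · simp only [decide_eq_true_eq] at h; exact h.2
  · simp at h

/-- the conditional swap function for a boolean marking `b`. -/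
def gf (b : ℕ → Bool) (hb : ∀ x, b x = true → x + 1 < n) (x : Fin n) : Fin n :=
  if h : b x then ⟨x + 1, hb x h⟩
  else if h2 : 0 < (x : ℕ) ∧ b ((x : ℕ) - 1) = true then ⟨(x : ℕ) - 1, by omega⟩
  else x

lemma gf_pos {b : ℕ → Bool} {hb : ∀ x, b x = true → x + 1 < n} {x : Fin n}
    (hx : b x = true) : gf n b hb x = ⟨(x : ℕ) + 1, hb x hx⟩ := by
  rw [gf, dif_pos hx]

lemma gf_mid {b : ℕ → Bool} {hb : ∀ x, b x = true → x + 1 < n} {x : Fin n}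
    (hx : ¬ b x = true) (h2 : 0 < (x : ℕ) ∧ b ((x : ℕ) - 1) = true) :
    gf n b hb x = ⟨(x : ℕ) - 1, by omega⟩ := by
  rw [gf, dif_neg hx, dif_pos h2]

lemma gf_id {b : ℕ → Bool} {hb : ∀ x, b x = true → x + 1 < n} {x : Fin n}
    (hx : ¬ b x = true) (h2 : ¬ (0 < (x : ℕ) ∧ b ((x : ℕ) - 1) = true)) :
    gf n b hb x = x := by
  rw [gf, dif_neg hx, dif_neg h2]

lemma not_both (hm : 2 ≤ m) {b : ℕ → Bool} (hb2 : ∀ x, b x = true → x % m = 0)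
    {x : ℕ} (hx : b x = true) : b (x + 1) = false := by
  by_contra h
  have h' : b (x + 1) = true := by simpa using h
  have d1 : m ∣ x := Nat.dvd_of_mod_eq_zero (hb2 x hx)
  have d2 : m ∣ (x + 1) := Nat.dvd_of_mod_eq_zero (hb2 (x + 1) h')
  have d3 : m ∣ 1 := by
    have := Nat.dvd_sub d2 d1
    simpa using this
  have := Nat.le_of_dvd one_pos d3
  omega

lemma gf_invol (hm : 2 ≤ m) (b : ℕ → Bool) (hb : ∀ x, b x = true → x + 1 < n)
    (hb2 : ∀ x, b x = true → x % m = 0) : Function.Involutive (gf n b hb) := by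
  intro x
  by_cases hx : b x = true
  · rw [gf_pos n hx]
    rw [gf_mid n (x := ⟨(x : ℕ) + 1, hb x hx⟩)
      (by simpa using not_both m hm hb2 hx) (by simp [hx])]
    ext; simp
  · by_cases h2 : 0 < (x : ℕ) ∧ b ((x : ℕ) - 1) = true
    · rw [gf_mid n hx h2]
      rw [gf_pos n (x := ⟨(x : ℕ) - 1, by omega⟩) (by simpa using h2.2)]
      ext
      simp
      omega
    · rw [gf_id n hx h2, gf_id n hx h2]

/-- The descent-normalization of τ. -/
noncomputable def Phi (hm : 2 ≤ m) (τ : Equiv.Perm (Fin n)) : Equiv.Perm (Fin n) :=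
  (Function.Involutive.toPerm _
    (gf_invol n m hm (pb n m τ) (fun _ h => pb_lt n m h) (fun _ h => pb_mod n m h))).trans τ

end AvoidAux

namespace AvoidAux

variable (n m : ℕ)

/-- Descent at every multiple of `m`. -/
def Desc (σ : Equiv.Perm (Fin n)) : Prop :=
  ∀ j : ℕ, j % m = 0 → ∀ h : j + 1 < n, σ ⟨j + 1, h⟩ < σ ⟨j, by omega⟩

lemma Phi_desc (hm : 2 ≤ m) (τ : Equiv.Perm (Fin n)) : Desc n m (Phi n m hm τ) := by
  intro j hj h
  set b := pb n m τ with hbdef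
  have hb : ∀ x, b x = true → x + 1 < n := fun _ h => pb_lt n m h
  have key : ∀ x : Fin n, Phi n m hm τ x = τ (gf n b hb x) := fun x => rfl
  rw [key, key]
  by_cases hbx : b j = true
  · -- ascent at j in τ : swap
    have h1 : gf n b hb ⟨j, by omega⟩ = ⟨j + 1, by omega⟩ := by
      rw [gf_pos n (x := ⟨j, by omega⟩) hbx]
    have hb1 : b (j + 1) = false := not_both m hm (fun _ h => pb_mod n m h) hbx
    have h2 : gf n b hb ⟨j + 1, h⟩ = ⟨j, by omega⟩ := by
      rw [gf_mid n (x := ⟨j + 1, h⟩) (by simp [hb1]) (by simp [hbx])]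
      ext; simp
    rw [h1, h2]
    have := pb_asc n m hbx
    exact this
  · -- descent at j in τ : keep
    have hbj1 : b (j + 1) = false := by
      rw [hbdef, pb]
      split
      · rw [decide_eq_false_iff_not]
        rintro ⟨hcon1, -⟩
        have d1 : m ∣ j := Nat.dvd_of_mod_eq_zero hj
        have d2 : m ∣ (j + 1) := Nat.dvd_of_mod_eq_zero hcon1
        have d3 : m ∣ 1 := by have := Nat.dvd_sub d2 d1; simpa using this
        have := Nat.le_of_dvd one_pos d3
        omega
      · rfl
    have hbjm : ¬ (0 < j ∧ b (j - 1) = true) := by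
      rintro ⟨hj0, hbm⟩
      have d1 : m ∣ j := Nat.dvd_of_mod_eq_zero hj
      have d2 : m ∣ (j - 1) := Nat.dvd_of_mod_eq_zero (pb_mod n m hbm)
      have d3 : m ∣ 1 := by
        have := Nat.dvd_sub d1 d2
        have e : j - (j - 1) = 1 := by omega
        rwa [e] at this
      have := Nat.le_of_dvd one_pos d3
      omega
    have h1 : gf n b hb ⟨j, by omega⟩ = ⟨j, by omega⟩ := by
      rw [gf_id n (x := ⟨j, by omega⟩) (by simpa using hbx) (by simpa using hbjm)]
    have h2 : gf n b hb ⟨j + 1, h⟩ = ⟨j + 1, h⟩ := by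
      rw [gf_id n (x := ⟨j + 1, h⟩) (by simp [hbj1]) (by simpa using hbx)]
    rw [h1, h2]
    -- τ j ≠ τ (j+1) and not <, so >
    have hne : τ ⟨j + 1, h⟩ ≠ τ ⟨j, by omega⟩ := by
      intro hcon
      have := τ.injective hcon
      simp [Fin.ext_iff] at this
    have hnlt : ¬ τ ⟨j, by omega⟩ < τ ⟨j + 1, h⟩ := by
      intro hcon
      apply hbx
      rw [hbdef, pb, dif_pos h]
      simp only [decide_eq_true_eq]
      exact ⟨hj, hcon⟩
    omega
  
lemma desc_avoids (hm : 2 ≤ m) {σ : Equiv.Perm (Fin n)} (hd : Desc n m σ) :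
    AvoidsConsIncreasing n (m + 1) σ := by
  rintro ⟨i, h, hyp⟩
  -- j0 : smallest multiple of m that is ≥ i
  set r := i % m with hr
  have hrm : r < m := Nat.mod_lt _ (by omega)
  set j0 := if r = 0 then i else i + (m - r) with hj0
  have hdm := (Nat.div_add_mod i m).symm
  have hj0m : j0 % m = 0 := by
    by_cases h0 : r = 0
    · simp only [hj0, if_pos h0]; omega
    · simp only [hj0, if_neg h0]
      have e : i + (m - r) = m * (i / m + 1) := by
        have : m * (i / m + 1) = m * (i / m) + m := by ring
        omega
      rw [e, Nat.mul_mod_right]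
  have hle : i ≤ j0 ∧ j0 ≤ i + m - 1 := by
    by_cases h0 : r = 0
    · rw [hj0, if_pos h0]; omega
    · rw [hj0, if_neg h0]; omega
  have hlt : j0 + 1 < n := by omega
  have hasc := hyp (j0 - i) (by omega)
  have e1 : (⟨i + (j0 - i), by omega⟩ : Fin n) = ⟨j0, by omega⟩ := by
    ext; simp; omega
  have e2 : (⟨i + (j0 - i) + 1, by omega⟩ : Fin n) = ⟨j0 + 1, hlt⟩ := by
    ext; simp; omega
  rw [e1, e2] at hasc
  have hdesc := hd j0 hj0m hlt
  exact absurd hasc (not_lt.mpr (le_of_lt hdesc))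

end AvoidAux

namespace AvoidAux

variable (n m : ℕ)

lemma pb_false1 {τ : Equiv.Perm (Fin n)} {x : ℕ} (hx : ¬ x + 1 < n) :
    pb n m τ x = false := by rw [pb, dif_neg hx]

lemma pb_false2 {τ : Equiv.Perm (Fin n)} {x : ℕ} (hx : ¬ x % m = 0) :
    pb n m τ x = false := by
  rw [pb]
  split
  · rw [decide_eq_false_iff_not]; rintro ⟨h1, -⟩; exact hx h1
  · rfl

lemma pb_ext {τ τ' : Equiv.Perm (Fin n)}
    (hε : ∀ j : {j : Fin n // (j : ℕ) % m = 0 ∧ (j : ℕ) + 1 < n},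
      pb n m τ (j : Fin n) = pb n m τ' (j : Fin n)) :
    pb n m τ = pb n m τ' := by
  funext x
  by_cases h1 : x + 1 < n
  · by_cases h2 : x % m = 0
    · exact hε ⟨⟨x, by omega⟩, ⟨h2, h1⟩⟩
    · rw [pb_false2 n m h2, pb_false2 n m h2]
  · rw [pb_false1 n m h1, pb_false1 n m h1]

lemma gf_congr {b b' : ℕ → Bool} (h : b = b')
    {hb : ∀ x, b x = true → x + 1 < n} {hb' : ∀ x, b' x = true → x + 1 < n} (x : Fin n) :
    gf n b hb x = gf n b' hb' x := by subst h; rfl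

lemma Phi_inj (hm : 2 ≤ m) {τ τ' : Equiv.Perm (Fin n)}
    (hσ : Phi n m hm τ = Phi n m hm τ')
    (hε : ∀ j : {j : Fin n // (j : ℕ) % m = 0 ∧ (j : ℕ) + 1 < n},
      pb n m τ (j : Fin n) = pb n m τ' (j : Fin n)) : τ = τ' := by
  have hb : pb n m τ = pb n m τ' := pb_ext n m hε
  set b := pb n m τ with hbd
  have hble : ∀ x, b x = true → x + 1 < n := fun _ h => pb_lt n m h
  have key : ∀ x : Fin n, Phi n m hm τ x = τ (gf n b hble x) := fun _ => rfl
  have key' : ∀ x : Fin n, Phi n m hm τ' x = τ' (gf n b hble x) := by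
    intro x
    have e : Phi n m hm τ' x = τ' (gf n (pb n m τ') (fun _ h => pb_lt n m h) x) := rfl
    rw [e, gf_congr n hb.symm]
  have hinv := gf_invol n m hm b hble (fun _ h => pb_mod n m h)
  apply Equiv.ext
  intro x
  calc τ x = τ (gf n b hble (gf n b hble x)) := by rw [hinv x]
    _ = Phi n m hm τ (gf n b hble x) := (key _).symm
    _ = Phi n m hm τ' (gf n b hble x) := by rw [hσ]
    _ = τ' (gf n b hble (gf n b hble x)) := key' _
    _ = τ' x := by rw [hinv x]

lemma card_D_le (hm0 : 0 < m) :
    Nat.card {j : Fin n // (j : ℕ) % m = 0 ∧ (j : ℕ) + 1 < n} ≤ n / m + 1 := by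
  have hinj : Function.Injective
      (fun j : {j : Fin n // (j : ℕ) % m = 0 ∧ (j : ℕ) + 1 < n} =>
        (⟨(j : Fin n) / m, by
          have hj : ((j : Fin n) : ℕ) < n := (j : Fin n).2
          have := Nat.div_le_div_right (c := m) (Nat.le_of_lt hj)
          omega⟩ : Fin (n / m + 1))) := by
    intro a b hab
    simp only [Fin.mk.injEq] at hab
    have ha := Nat.div_add_mod ((a : Fin n) : ℕ) m
    have hb := Nat.div_add_mod ((b : Fin n) : ℕ) m
    have ha2 := a.2.1
    have hb2 := b.2.1
    apply Subtype.ext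
    apply Fin.ext
    rw [ha2] at ha
    rw [hb2] at hb
    rw [← ha, ← hb, hab]
  calc Nat.card {j : Fin n // (j : ℕ) % m = 0 ∧ (j : ℕ) + 1 < n}
      ≤ Nat.card (Fin (n / m + 1)) := Nat.card_le_card_of_injective _ hinj
    _ = n / m + 1 := by simp

lemma count_lb (hm : 2 ≤ m) :
    n.factorial ≤
      Nat.card {σ : Equiv.Perm (Fin n) // AvoidsConsIncreasing n (m + 1) σ} * 2 ^ (n / m + 1) := by
  set D := {j : Fin n // (j : ℕ) % m = 0 ∧ (j : ℕ) + 1 < n}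
  set A := {σ : Equiv.Perm (Fin n) // AvoidsConsIncreasing n (m + 1) σ}
  have hF : Function.Injective (fun τ : Equiv.Perm (Fin n) =>
      ((⟨Phi n m hm τ, desc_avoids n m hm (Phi_desc n m hm τ)⟩ : A),
        (fun j : D => pb n m τ ((j : Fin n) : ℕ)))) := by
    intro τ τ' h
    simp only [Prod.mk.injEq, Subtype.mk.injEq] at h
    exact Phi_inj n m hm h.1 (fun j => congrFun h.2 j)
  calc n.factorial = Nat.card (Equiv.Perm (Fin n)) := by
        rw [Nat.card_eq_fintype_card, Fintype.card_perm, Fintype.card_fin]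
    _ ≤ Nat.card (A × (D → Bool)) := Nat.card_le_card_of_injective _ hF
    _ = Nat.card A * Nat.card (D → Bool) := Nat.card_prod _ _
    _ = Nat.card A * 2 ^ Nat.card D := by
        rw [Nat.card_eq_fintype_card (α := D → Bool), Nat.card_eq_fintype_card (α := D)]
        simp [Fintype.card_fun]
    _ ≤ Nat.card A * 2 ^ (n / m + 1) := by
        apply Nat.mul_le_mul_left
        exact Nat.pow_le_pow_right (by norm_num) (card_D_le n m (by omega))

end AvoidAux


/-- For every `0 < c < 1` there is a positive integer `k` such that for all sufficiently
large `n`, at least `c ^ n * n!` permutations of `[n]` avoid the consecutive pattern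
`1 2 ⋯ k`. -/
theorem many_perms_avoid_consecutive_increasing (c : ℝ) (hc0 : 0 < c) (hc1 : c < 1) :
    ∃ k : ℕ, 0 < k ∧ ∃ N : ℕ, ∀ n : ℕ, N ≤ n →
      c ^ n * (n.factorial : ℝ) ≤
        (Nat.card {σ : Equiv.Perm (Fin n) // AvoidsConsIncreasing n k σ} : ℝ) := by
  obtain ⟨m0, hm0⟩ := exists_pow_lt_of_lt_one (show (0:ℝ) < 1/4 by norm_num) hc1
  set m := max 2 m0 with hmdef
  have hm2 : 2 ≤ m := le_max_left _ _
  have hcm : c ^ m ≤ 1/4 :=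
    le_of_lt (lt_of_le_of_lt (pow_le_pow_of_le_one hc0.le hc1.le (le_max_right _ _)) hm0)
  refine ⟨m + 1, by omega, m, fun n hn => ?_⟩
  set q := n / m + 1 with hq
  set A := Nat.card {σ : Equiv.Perm (Fin n) // AvoidsConsIncreasing n (m + 1) σ} with hA
  have hAreal : (n.factorial : ℝ) ≤ (A : ℝ) * 2 ^ q := by
    have := AvoidAux.count_lb n m hm2
    exact_mod_cast this
  set d := n / m with hd
  have hd1 : 1 ≤ d := (Nat.one_le_div_iff (by omega)).mpr hn
  have key : c ^ n * 2 ^ q ≤ 1 := by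
    have h2q : (2:ℝ) ^ q ≤ 2 ^ (2 * d) := by
      apply pow_le_pow_right₀ (by norm_num)
      omega
    have hcn : c ^ n ≤ (c ^ m) ^ d := by
      rw [← pow_mul]
      apply pow_le_pow_of_le_one hc0.le hc1.le
      calc m * d = d * m := Nat.mul_comm _ _
        _ ≤ n := Nat.div_mul_le_self n m
    calc c ^ n * 2 ^ q ≤ (c ^ m) ^ d * 2 ^ (2 * d) := by
          apply mul_le_mul hcn h2q (by positivity)
          exact pow_nonneg (pow_nonneg hc0.le m) d
      _ ≤ (1/4 : ℝ) ^ d * 2 ^ (2 * d) := by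
          gcongr
      _ = 1 := by
          rw [pow_mul, ← mul_pow]
          norm_num
  calc c ^ n * (n.factorial : ℝ) ≤ c ^ n * ((A : ℝ) * 2 ^ q) :=
        mul_le_mul_of_nonneg_left hAreal (pow_nonneg hc0.le n)
    _ = (A : ℝ) * (c ^ n * 2 ^ q) := by ring
    _ ≤ (A : ℝ) * 1 := mul_le_mul_of_nonneg_left key (Nat.cast_nonneg _)
    _ = (A : ℝ) := mul_one _
end
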